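/- arXiv:1512.09261 — 7 statements merged into one kernel-verified Lean document; each statement's English description precedes it below -/
import Mathlib

section
/- With the network data and classical solution described in the context, for every t ≥ 0 the energy E(t) := (1/2) Σ_{j=1}^{N} ∫₀^{ℓ_j} ( |∂_t y_j(x,t)|² + |∂_x y_j(x,t)|² ) dx + (1/2) Σ_{k ∈ I_M} ( |s_k'(t)|² + |s_k(t)|² ) satisfies the dissipation identity E(0) − E(t) = Σ_{k ∈ I_S} ∫₀^{t} |∂_t y_{j_k}(a_k, τ)|² dτ. In particular E(t) ≤ E(0) for all t ≥ 0. -/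
open Set MeasureTheory intervalIntegral

/-- time partial derivative `∂ₜ f (x, t)` of `f : ℝ → ℝ → ℝ` (first variable `x`). -/
noncomputable def pt (f : ℝ → ℝ → ℝ) (x t : ℝ) : ℝ := deriv (f x) t

/-- second time partial derivative `∂ₜₜ f (x, t)`. -/
noncomputable def ptt (f : ℝ → ℝ → ℝ) (x t : ℝ) : ℝ := deriv (deriv (f x)) t

/-- space partial derivative `∂ₓ f (x, t)`. -/
noncomputable def px (f : ℝ → ℝ → ℝ) (x t : ℝ) : ℝ := deriv (fun ξ => f ξ t) x

/-- second space partial derivative `∂ₓₓ f (x, t)`. -/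
noncomputable def pxx (f : ℝ → ℝ → ℝ) (x t : ℝ) : ℝ := deriv (fun ξ => px f ξ t) x

lemma hasDerivAt_snd_comp (G : ℝ × ℝ → ℝ) {x t : ℝ} (h : DifferentiableAt ℝ G (x, t)) :
    HasDerivAt (fun τ => G (x, τ)) (fderiv ℝ G (x, t) (0, 1)) t :=
  h.hasFDerivAt.comp_hasDerivAt t ((hasDerivAt_const t x).prodMk (hasDerivAt_id t))

lemma hasDerivAt_fst_comp (G : ℝ × ℝ → ℝ) {x t : ℝ} (h : DifferentiableAt ℝ G (x, t)) :
    HasDerivAt (fun ξ => G (ξ, t)) (fderiv ℝ G (x, t) (1, 0)) x :=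
  h.hasFDerivAt.comp_hasDerivAt x ((hasDerivAt_id x).prodMk (hasDerivAt_const x t))

lemma pt_eq (f : ℝ → ℝ → ℝ) (hf : Differentiable ℝ (fun p : ℝ × ℝ => f p.1 p.2)) (x t : ℝ) :
    pt f x t = fderiv ℝ (fun p : ℝ × ℝ => f p.1 p.2) (x, t) (0, 1) :=
  (hasDerivAt_snd_comp _ (hf (x, t))).deriv

lemma px_eq (f : ℝ → ℝ → ℝ) (hf : Differentiable ℝ (fun p : ℝ × ℝ => f p.1 p.2)) (x t : ℝ) :
    px f x t = fderiv ℝ (fun p : ℝ × ℝ => f p.1 p.2) (x, t) (1, 0) :=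
  (hasDerivAt_fst_comp _ (hf (x, t))).deriv

lemma pt_cont (f : ℝ → ℝ → ℝ) (hf : ContDiff ℝ 2 (fun p : ℝ × ℝ => f p.1 p.2)) :
    Continuous (fun p : ℝ × ℝ => pt f p.1 p.2) := by
  have h1 : ContDiff ℝ 1 (fun p : ℝ × ℝ =>
      fderiv ℝ (fun q : ℝ × ℝ => f q.1 q.2) p ((0:ℝ), (1:ℝ))) :=
    (hf.fderiv_right (by norm_num)).clm_apply contDiff_const
  have h2 : (fun p : ℝ × ℝ => pt f p.1 p.2) = fun p : ℝ × ℝ =>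
      fderiv ℝ (fun q : ℝ × ℝ => f q.1 q.2) p ((0:ℝ), (1:ℝ)) := by
    funext p
    exact pt_eq f (hf.differentiable (by norm_num)) p.1 p.2
  rw [h2]; exact h1.continuous

lemma px_cont (f : ℝ → ℝ → ℝ) (hf : ContDiff ℝ 2 (fun p : ℝ × ℝ => f p.1 p.2)) :
    Continuous (fun p : ℝ × ℝ => px f p.1 p.2) := by
  have h1 : ContDiff ℝ 1 (fun p : ℝ × ℝ =>
      fderiv ℝ (fun q : ℝ × ℝ => f q.1 q.2) p ((1:ℝ), (0:ℝ))) :=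
    (hf.fderiv_right (by norm_num)).clm_apply contDiff_const
  have h2 : (fun p : ℝ × ℝ => px f p.1 p.2) = fun p : ℝ × ℝ =>
      fderiv ℝ (fun q : ℝ × ℝ => f q.1 q.2) p ((1:ℝ), (0:ℝ)) := by
    funext p
    exact px_eq f (hf.differentiable (by norm_num)) p.1 p.2
  rw [h2]; exact h1.continuous

lemma edge_identity (f : ℝ → ℝ → ℝ) (hf : ContDiff ℝ 2 (fun p : ℝ × ℝ => f p.1 p.2))
    {L t : ℝ} (hL : 0 ≤ L) (ht : 0 ≤ t)
    (hw : ∀ x ∈ Icc (0:ℝ) L, ∀ τ, 0 ≤ τ → ptt f x τ = pxx f x τ) :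
    (∫ x in (0:ℝ)..L, ((pt f x t)^2 + (px f x t)^2))
      - (∫ x in (0:ℝ)..L, ((pt f x 0)^2 + (px f x 0)^2))
    = 2 * ∫ τ in (0:ℝ)..t, (pt f L τ * px f L τ - pt f 0 τ * px f 0 τ) := by
  set F : ℝ × ℝ → ℝ := fun p => f p.1 p.2 with hF
  have hFd : Differentiable ℝ F := hf.differentiable (by norm_num)
  set A : ℝ × ℝ → ℝ := fun p => fderiv ℝ F p (0, 1) with hA
  set B : ℝ × ℝ → ℝ := fun p => fderiv ℝ F p (1, 0) with hB
  have hA1 : ContDiff ℝ 1 A := (hf.fderiv_right (by norm_num)).clm_apply contDiff_const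
  have hB1 : ContDiff ℝ 1 B := (hf.fderiv_right (by norm_num)).clm_apply contDiff_const
  have hAd : Differentiable ℝ A := hA1.differentiable one_ne_zero
  have hBd : Differentiable ℝ B := hB1.differentiable one_ne_zero
  have hAc : Continuous A := hA1.continuous
  have hBc : Continuous B := hB1.continuous
  have hAx : Continuous (fun p : ℝ × ℝ => fderiv ℝ A p ((1:ℝ), (0:ℝ))) :=
    (hA1.continuous_fderiv one_ne_zero).clm_apply continuous_const
  have hBx : Continuous (fun p : ℝ × ℝ => fderiv ℝ B p ((1:ℝ), (0:ℝ))) :=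
    (hB1.continuous_fderiv one_ne_zero).clm_apply continuous_const
  have hpt : ∀ x τ, pt f x τ = A (x, τ) := fun x τ => pt_eq f hFd x τ
  have hpx : ∀ x τ, px f x τ = B (x, τ) := fun x τ => px_eq f hFd x τ
  have hF2 : Differentiable ℝ (fderiv ℝ F) :=
    (hf.fderiv_right (by norm_num)).differentiable one_ne_zero
  have hfderivA : ∀ (p w : ℝ × ℝ), fderiv ℝ A p w = fderiv ℝ (fderiv ℝ F) p w (0, 1) := by
    intro p w
    have h2 : HasFDerivAt A ((ContinuousLinearMap.apply ℝ ℝ ((0:ℝ),(1:ℝ))).comp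
        (fderiv ℝ (fderiv ℝ F) p)) p :=
      ((ContinuousLinearMap.apply ℝ ℝ ((0:ℝ),(1:ℝ))).hasFDerivAt.comp p (hF2 p).hasFDerivAt)
    rw [h2.fderiv]; rfl
  have hfderivB : ∀ (p w : ℝ × ℝ), fderiv ℝ B p w = fderiv ℝ (fderiv ℝ F) p w (1, 0) := by
    intro p w
    have h2 : HasFDerivAt B ((ContinuousLinearMap.apply ℝ ℝ ((1:ℝ),(0:ℝ))).comp
        (fderiv ℝ (fderiv ℝ F) p)) p :=
      ((ContinuousLinearMap.apply ℝ ℝ ((1:ℝ),(0:ℝ))).hasFDerivAt.comp p (hF2 p).hasFDerivAt)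
    rw [h2.fderiv]; rfl
  have hsymm : ∀ p : ℝ × ℝ, fderiv ℝ A p (1, 0) = fderiv ℝ B p (0, 1) := by
    intro p
    rw [hfderivA p (1,0), hfderivB p (0,1)]
    exact (second_derivative_symmetric (fun q => (hFd q).hasFDerivAt)
      (hF2 p).hasFDerivAt (0,1) (1,0)).symm
  have hptt : ∀ x τ, ptt f x τ = fderiv ℝ A (x, τ) (0, 1) := by
    intro x τ
    have hd : deriv (f x) = fun σ => A (x, σ) := funext fun σ => hpt x σ
    show deriv (deriv (f x)) τ = _
    rw [hd]
    exact (hasDerivAt_snd_comp A (hAd (x, τ))).deriv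
  have hpxx : ∀ x τ, pxx f x τ = fderiv ℝ B (x, τ) (1, 0) := by
    intro x τ
    have hd : (fun ξ => px f ξ τ) = fun ξ => B (ξ, τ) := funext fun ξ => hpx ξ τ
    show deriv (fun ξ => px f ξ τ) x = _
    rw [hd]
    exact (hasDerivAt_fst_comp B (hBd (x, τ))).deriv
  set D : ℝ × ℝ → ℝ := fun p => 2 * (fderiv ℝ A p (1, 0) * B p + A p * fderiv ℝ B p (1, 0))
    with hD
  have hDc : Continuous D := continuous_const.mul ((hAx.mul hBc).add (hAc.mul hBx))
  have hx2AB : ∀ x τ, HasDerivAt (fun ξ => 2 * (A (ξ, τ) * B (ξ, τ))) (D (x, τ)) x := by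
    intro x τ
    have h := ((hasDerivAt_fst_comp A (hAd (x, τ))).mul
      (hasDerivAt_fst_comp B (hBd (x, τ)))).const_mul (2:ℝ)
    simpa [hD] using h
  have htq : ∀ x ∈ Icc (0:ℝ) L, ∀ τ, 0 ≤ τ →
      HasDerivAt (fun σ => A (x, σ) ^ 2 + B (x, σ) ^ 2) (D (x, τ)) τ := by
    intro x hx τ hτ
    have ha := hasDerivAt_snd_comp A (hAd (x, τ))
    have hb := hasDerivAt_snd_comp B (hBd (x, τ))
    have h1 := (ha.pow 2).add (hb.pow 2)
    have h2 : fderiv ℝ A (x, τ) (0, 1) = fderiv ℝ B (x, τ) (1, 0) := by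
      rw [← hptt x τ, ← hpxx x τ]; exact hw x hx τ hτ
    have h3 := hsymm (x, τ)
    have heq : (2:ℕ) * A (x, τ) ^ 1 * fderiv ℝ A (x, τ) (0, 1)
        + (2:ℕ) * B (x, τ) ^ 1 * fderiv ℝ B (x, τ) (0, 1) = D (x, τ) := by
      rw [h2, ← h3, hD]
      push_cast
      ring
    rw [← heq]
    exact h1
  have hFTCt : ∀ x ∈ Icc (0:ℝ) L,
      (A (x, t) ^ 2 + B (x, t) ^ 2) - (A (x, 0) ^ 2 + B (x, 0) ^ 2)
        = ∫ τ in (0:ℝ)..t, D (x, τ) := by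
    intro x hx
    exact (intervalIntegral.integral_eq_sub_of_hasDerivAt
      (fun τ hτ => htq x hx τ (by rw [uIcc_of_le ht] at hτ; exact hτ.1))
      ((hDc.comp (continuous_const.prodMk continuous_id)).intervalIntegrable 0 t)).symm
  have hswap : (∫ x in (0:ℝ)..L, ∫ τ in (0:ℝ)..t, D (x, τ))
      = ∫ τ in (0:ℝ)..t, ∫ x in (0:ℝ)..L, D (x, τ) := by
    rw [intervalIntegral.integral_of_le hL, intervalIntegral.integral_of_le ht]
    simp_rw [intervalIntegral.integral_of_le ht, intervalIntegral.integral_of_le hL]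
    apply MeasureTheory.integral_integral_swap
    have h1 : IntegrableOn D (Ioc (0:ℝ) L ×ˢ Ioc (0:ℝ) t) volume :=
      (hDc.continuousOn.integrableOn_compact (isCompact_Icc.prod isCompact_Icc)).mono_set
        (prod_mono Ioc_subset_Icc_self Ioc_subset_Icc_self)
    rw [Measure.prod_restrict]
    rw [← Measure.volume_eq_prod]
    exact h1
  have hFTCx : ∀ τ : ℝ, (∫ x in (0:ℝ)..L, D (x, τ))
      = 2 * (A (L, τ) * B (L, τ)) - 2 * (A (0, τ) * B (0, τ)) :=
    fun τ => intervalIntegral.integral_eq_sub_of_hasDerivAt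
      (fun x _ => hx2AB x τ)
      ((hDc.comp (continuous_id.prodMk continuous_const)).intervalIntegrable 0 L)
  have hqint : ∀ σ : ℝ, IntervalIntegrable (fun x => A (x, σ) ^ 2 + B (x, σ) ^ 2) volume 0 L :=
    fun σ => (((hAc.comp (continuous_id.prodMk continuous_const)).pow 2).add
      ((hBc.comp (continuous_id.prodMk continuous_const)).pow 2)).intervalIntegrable 0 L
  simp_rw [hpt, hpx]
  rw [← intervalIntegral.integral_sub (hqint t) (hqint 0)]
  rw [intervalIntegral.integral_congr (g := fun x => ∫ τ in (0:ℝ)..t, D (x, τ))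
    (fun x hx => hFTCt x (by rwa [uIcc_of_le hL] at hx))]
  rw [hswap]
  rw [intervalIntegral.integral_congr (g := fun τ => 2 * (A (L, τ) * B (L, τ) - A (0, τ) * B (0, τ)))
    (fun τ _ => by rw [hFTCx τ]; ring)]
  rw [intervalIntegral.integral_const_mul]

/-- energy dissipation identity for the fluid-structure network system on a tree:
`E(0) − E(t) = Σ_{k ∈ I_S} ∫₀ᵗ |∂ₜ y_{j_k}(a_k, τ)|² dτ`, and in particular `E(t) ≤ E(0)`. -/
theorem stmt_2
    -- network data: `N ≥ 1` edges `Fin N`, vertices `Fin (N+1)` with root `0`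
    (N : ℕ) (hN : 0 < N)
    (ℓ : Fin N → ℝ) (hℓ : ∀ j, 0 < ℓ j)
    -- each edge `j` has endpoint vertices `neg j` (at `x = 0`) and `pos j` (at `x = ℓ j`)
    (neg pos : Fin N → Fin (N + 1)) (hnp : ∀ j, neg j ≠ pos j)
    -- `Jk k` : set of edges adjacent to vertex `k`
    (Jk : Fin (N + 1) → Finset (Fin N))
    (hJk : ∀ k, Jk k = Finset.univ.filter (fun j => neg j = k ∨ pos j = k))
    -- the root is an endpoint of the first edge only
    (hroot : Jk 0 = {⟨0, hN⟩})
    -- interior and exterior vertices (other than the root)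
    (IM IS : Finset (Fin (N + 1)))
    (hIM : IM = Finset.univ.filter (fun k => k ≠ 0 ∧ 2 ≤ (Jk k).card))
    (hIS : IS = Finset.univ.filter (fun k => k ≠ 0 ∧ (Jk k).card = 1))
    -- for `k ∈ I_S`, `jS k` is the unique edge adjacent to `a_k`
    (jS : Fin (N + 1) → Fin N) (hjS : ∀ k ∈ IS, Jk k = {jS k})
    -- incidence coefficients `d k j`
    (d : Fin (N + 1) → Fin N → ℝ)
    (hd : ∀ k j, d k j = if pos j = k then 1 else if neg j = k then -1 else 0)
    -- `a k j` : coordinate on edge `j` of the vertex `k`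
    (a : Fin (N + 1) → Fin N → ℝ)
    (ha : ∀ k j, a k j = if pos j = k then ℓ j else 0)
    -- the classical solution
    (y : Fin N → ℝ → ℝ → ℝ) (s : Fin (N + 1) → ℝ → ℝ)
    (hy : ∀ j, ContDiff ℝ 2 (fun pr : ℝ × ℝ => y j pr.1 pr.2))
    (hs : ∀ k ∈ IM, ContDiff ℝ 2 (s k))
    -- wave equation on each edge
    (hwave : ∀ j, ∀ x ∈ Icc (0:ℝ) (ℓ j), ∀ t, 0 ≤ t → ptt (y j) x t = pxx (y j) x t)
    -- continuity at interior vertices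
    (hcont : ∀ k ∈ IM, ∀ t, 0 ≤ t → ∀ j ∈ Jk k, ∀ l ∈ Jk k,
      y j (a k j) t = y l (a k l) t)
    -- balance condition at interior vertices
    (hbal : ∀ k ∈ IM, ∀ t, 0 ≤ t →
      ∑ j ∈ Jk k, d k j * px (y j) (a k j) t = deriv (s k) t)
    -- mass equation at interior vertices
    (hmass : ∀ k ∈ IM, ∀ t, 0 ≤ t → ∀ j ∈ Jk k,
      deriv (deriv (s k)) t + s k t = - pt (y j) (a k j) t)
    -- Dirichlet condition at the root
    (hdir : ∀ t, 0 ≤ t → y ⟨0, hN⟩ (a 0 ⟨0, hN⟩) t = 0)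
    -- feedback conditions at exterior vertices
    (hfb : ∀ k ∈ IS, ∀ t, 0 ≤ t →
      d k (jS k) * px (y (jS k)) (a k (jS k)) t = - pt (y (jS k)) (a k (jS k)) t)
    -- the energy
    (E : ℝ → ℝ)
    (hE : ∀ t, E t =
      (1/2) * ∑ j, (∫ x in (0:ℝ)..(ℓ j), ((pt (y j) x t)^2 + (px (y j) x t)^2))
      + (1/2) * ∑ k ∈ IM, ((deriv (s k) t)^2 + (s k t)^2)) :
    ∀ t, 0 ≤ t →
      (E 0 - E t = ∑ k ∈ IS, ∫ τ in (0:ℝ)..t, (pt (y (jS k)) (a k (jS k)) τ)^2)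
      ∧ E t ≤ E 0 := by
  intro t ht
  -- continuity of traces
  have hycont : ∀ (j : Fin N) (c : ℝ), Continuous (fun τ => pt (y j) c τ) := fun j c =>
    (pt_cont (y j) (hy j)).comp (continuous_const.prodMk continuous_id)
  have hxcont : ∀ (j : Fin N) (c : ℝ), Continuous (fun τ => px (y j) c τ) := fun j c =>
    (px_cont (y j) (hy j)).comp (continuous_const.prodMk continuous_id)
  -- edge and mass-point auxiliary functions
  set G : Fin N → ℝ → ℝ := fun j τ =>
    pt (y j) (ℓ j) τ * px (y j) (ℓ j) τ - pt (y j) 0 τ * px (y j) 0 τ with hG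
  set H : Fin (N + 1) → ℝ → ℝ := fun k τ =>
    (deriv (deriv (s k)) τ + s k τ) * deriv (s k) τ with hH
  have hGc : ∀ j, Continuous (G j) := fun j =>
    ((hycont j (ℓ j)).mul (hxcont j (ℓ j))).sub ((hycont j 0).mul (hxcont j 0))
  -- regularity of s
  have hds : ∀ k ∈ IM, ContDiff ℝ 1 (deriv (s k)) := by
    intro k hk
    have hsk := hs k hk
    have e : ((2:WithTop ℕ∞)) = 1 + 1 := by norm_num
    rw [e] at hsk
    exact (contDiff_succ_iff_deriv.mp hsk).2.2
  have hHc : ∀ k ∈ IM, Continuous (H k) := by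
    intro k hk
    exact (((contDiff_one_iff_deriv.mp (hds k hk)).2).add (hs k hk).continuous).mul
      (hds k hk).continuous
  -- edge identities
  have hedge : ∀ j : Fin N,
      (∫ x in (0:ℝ)..(ℓ j), ((pt (y j) x t)^2 + (px (y j) x t)^2))
        - (∫ x in (0:ℝ)..(ℓ j), ((pt (y j) x 0)^2 + (px (y j) x 0)^2))
      = 2 * ∫ τ in (0:ℝ)..t, G j τ :=
    fun j => edge_identity (y j) (hy j) (hℓ j).le ht (hwave j)
  -- mass-point identities
  have hIMpart : ∀ k ∈ IM,
      ((deriv (s k) t)^2 + (s k t)^2) - ((deriv (s k) 0)^2 + (s k 0)^2)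
        = 2 * ∫ τ in (0:ℝ)..t, H k τ := by
    intro k hk
    have hder : ∀ τ : ℝ, HasDerivAt (fun σ => (deriv (s k) σ)^2 + (s k σ)^2)
        (2 * H k τ) τ := by
      intro τ
      have h1 : HasDerivAt (deriv (s k)) (deriv (deriv (s k)) τ) τ :=
        (((hds k hk).differentiable one_ne_zero) τ).hasDerivAt
      have h2 : HasDerivAt (s k) (deriv (s k) τ) τ :=
        (((hs k hk).differentiable (by norm_num)) τ).hasDerivAt
      have h3 := (h1.pow 2).add (h2.pow 2)
      refine h3.congr_deriv ?_
      rw [hH]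
      push_cast
      ring
    have h5 := intervalIntegral.integral_eq_sub_of_hasDerivAt (fun τ _ => hder τ)
      ((continuous_const.mul (hHc k hk)).intervalIntegrable 0 t)
    rw [intervalIntegral.integral_const_mul] at h5
    linarith [h5]
  -- Dirichlet : time derivative vanishes at the root
  have hpt0 : ∀ τ : ℝ, 0 ≤ τ → pt (y ⟨0, hN⟩) (a 0 ⟨0, hN⟩) τ = 0 := by
    intro τ hτ
    have hdiff : Differentiable ℝ (y ⟨0, hN⟩ (a 0 ⟨0, hN⟩)) := by
      intro σ
      have h0 := ((hy ⟨0, hN⟩).differentiable (by norm_num)) (a 0 ⟨0, hN⟩, σ)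
      exact (hasDerivAt_snd_comp _ h0).differentiableAt
    have h1 : HasDerivWithinAt (y ⟨0, hN⟩ (a 0 ⟨0, hN⟩))
        (deriv (y ⟨0, hN⟩ (a 0 ⟨0, hN⟩)) τ) (Ici 0) τ :=
      (hdiff τ).hasDerivAt.hasDerivWithinAt
    have h2 : HasDerivWithinAt (y ⟨0, hN⟩ (a 0 ⟨0, hN⟩)) 0 (Ici 0) τ := by
      apply (hasDerivWithinAt_const τ (Ici (0:ℝ)) (0:ℝ)).congr
      · intro σ hσ; exact hdir σ hσ
      · exact hdir τ hτ
    have hu : UniqueDiffWithinAt ℝ (Ici (0:ℝ)) τ := uniqueDiffOn_Ici 0 τ hτ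
    have h3 := h1.derivWithin hu
    have h4 := h2.derivWithin hu
    show deriv (y ⟨0, hN⟩ (a 0 ⟨0, hN⟩)) τ = 0
    rw [← h3, h4]
  -- vanishing incidence off J_k
  have hd0 : ∀ k, ∀ j, j ∉ Jk k → d k j = 0 := by
    intro k j hj
    rw [hJk] at hj
    simp only [Finset.mem_filter, Finset.mem_univ, true_and] at hj
    push_neg at hj
    rw [hd]
    simp [hj.1, hj.2]
  -- restriction of the vertex sums
  have hSrestrict : ∀ (k : Fin (N+1)) (τ : ℝ),
      (∑ j : Fin N, d k j * (pt (y j) (a k j) τ * px (y j) (a k j) τ))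
        = ∑ j ∈ Jk k, d k j * (pt (y j) (a k j) τ * px (y j) (a k j) τ) :=
    fun k τ => (Finset.sum_subset (Finset.subset_univ _)
      (fun j _ hj => by rw [hd0 k j hj, zero_mul])).symm
  -- key pointwise identity
  have key : ∀ τ : ℝ, 0 ≤ τ →
      (∑ j : Fin N, G j τ) + ∑ k ∈ IM, H k τ
        = - ∑ k ∈ IS, (pt (y (jS k)) (a k (jS k)) τ)^2 := by
    intro τ hτ
    have hGsum : ∀ j : Fin N, G j τ
        = ∑ k : Fin (N+1), d k j * (pt (y j) (a k j) τ * px (y j) (a k j) τ) := by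
      intro j
      have hterm : ∀ k : Fin (N+1), d k j * (pt (y j) (a k j) τ * px (y j) (a k j) τ)
          = (if pos j = k then pt (y j) (ℓ j) τ * px (y j) (ℓ j) τ else 0)
          + (if neg j = k then -(pt (y j) 0 τ * px (y j) 0 τ) else 0) := by
        intro k
        rw [hd k j, ha k j]
        by_cases h1 : pos j = k
        · have h2 : ¬ neg j = k := fun h => hnp j (h.trans h1.symm)
          simp [h1, h2]
        · by_cases h2 : neg j = k
          · simp [h1, h2]
          · simp [h1, h2]
      rw [Finset.sum_congr rfl (fun k _ => hterm k), Finset.sum_add_distrib,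
        Finset.sum_ite_eq Finset.univ (pos j), Finset.sum_ite_eq Finset.univ (neg j)]
      simp only [Finset.mem_univ, if_true, hG]
      ring
    have hswap : (∑ j : Fin N, G j τ)
        = ∑ k : Fin (N+1), ∑ j : Fin N,
            d k j * (pt (y j) (a k j) τ * px (y j) (a k j) τ) := by
      rw [Finset.sum_congr rfl (fun j _ => hGsum j)]
      exact Finset.sum_comm
    -- reduce to IM ∪ IS
    have hdisj : Disjoint IM IS := by
      rw [hIM, hIS, Finset.disjoint_left]
      intro k hk1 hk2
      simp only [Finset.mem_filter, Finset.mem_univ, true_and] at hk1 hk2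
      omega
    have hzero : ∀ k ∈ (Finset.univ : Finset (Fin (N+1))), k ∉ IM ∪ IS →
        (∑ j : Fin N, d k j * (pt (y j) (a k j) τ * px (y j) (a k j) τ)) = 0 := by
      intro k _ hk
      rw [Finset.mem_union] at hk
      push_neg at hk
      obtain ⟨hk1, hk2⟩ := hk
      rw [hIM] at hk1; rw [hIS] at hk2
      simp only [Finset.mem_filter, Finset.mem_univ, true_and] at hk1 hk2
      push_neg at hk1 hk2
      by_cases hk0 : k = 0
      · subst hk0
        rw [hSrestrict, hroot, Finset.sum_singleton, hpt0 τ hτ]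
        ring
      · have hcard : (Jk k).card = 0 := by
          have := hk1 hk0; have := hk2 hk0; omega
        rw [hSrestrict, Finset.card_eq_zero.mp hcard, Finset.sum_empty]
    have hIMval : ∀ k ∈ IM,
        (∑ j : Fin N, d k j * (pt (y j) (a k j) τ * px (y j) (a k j) τ)) = - H k τ := by
      intro k hk
      rw [hSrestrict]
      have hmass' : ∀ j ∈ Jk k, pt (y j) (a k j) τ
          = -(deriv (deriv (s k)) τ + s k τ) := by
        intro j hj
        have := hmass k hk τ hτ j hj
        linarith
      calc (∑ j ∈ Jk k, d k j * (pt (y j) (a k j) τ * px (y j) (a k j) τ))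
          = ∑ j ∈ Jk k, (-(deriv (deriv (s k)) τ + s k τ))
              * (d k j * px (y j) (a k j) τ) := by
            refine Finset.sum_congr rfl fun j hj => ?_
            rw [hmass' j hj]; ring
        _ = (-(deriv (deriv (s k)) τ + s k τ))
              * ∑ j ∈ Jk k, d k j * px (y j) (a k j) τ := by
            rw [Finset.mul_sum]
        _ = - H k τ := by rw [hbal k hk τ hτ, hH]; ring
    have hISval : ∀ k ∈ IS,
        (∑ j : Fin N, d k j * (pt (y j) (a k j) τ * px (y j) (a k j) τ))
          = - (pt (y (jS k)) (a k (jS k)) τ)^2 := by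
      intro k hk
      rw [hSrestrict, hjS k hk, Finset.sum_singleton]
      have h1 : d k (jS k) * (pt (y (jS k)) (a k (jS k)) τ * px (y (jS k)) (a k (jS k)) τ)
          = pt (y (jS k)) (a k (jS k)) τ * (d k (jS k) * px (y (jS k)) (a k (jS k)) τ) := by
        ring
      rw [h1, hfb k hk τ hτ]
      ring
    rw [hswap, ← Finset.sum_subset (Finset.subset_univ (IM ∪ IS)) hzero,
      Finset.sum_union hdisj, Finset.sum_congr rfl hIMval, Finset.sum_congr rfl hISval]
    rw [Finset.sum_neg_distrib, Finset.sum_neg_distrib]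
    ring
  -- integrability
  have hGint : ∀ j : Fin N, IntervalIntegrable (G j) volume 0 t :=
    fun j => (hGc j).intervalIntegrable 0 t
  have hQint : ∀ k ∈ IS, IntervalIntegrable
      (fun τ => (pt (y (jS k)) (a k (jS k)) τ)^2) volume 0 t :=
    fun k _ => ((hycont (jS k) (a k (jS k))).pow 2).intervalIntegrable 0 t
  -- assemble
  have hmain : E t - E 0 = - ∑ k ∈ IS, ∫ τ in (0:ℝ)..t, (pt (y (jS k)) (a k (jS k)) τ)^2 := by
    have h1 : E t - E 0
        = (1/2) * ∑ j, ((∫ x in (0:ℝ)..(ℓ j), ((pt (y j) x t)^2 + (px (y j) x t)^2))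
            - (∫ x in (0:ℝ)..(ℓ j), ((pt (y j) x 0)^2 + (px (y j) x 0)^2)))
          + (1/2) * ∑ k ∈ IM, (((deriv (s k) t)^2 + (s k t)^2)
            - ((deriv (s k) 0)^2 + (s k 0)^2)) := by
      rw [hE t, hE 0, Finset.sum_sub_distrib, Finset.sum_sub_distrib]
      ring
    rw [h1, Finset.sum_congr rfl (fun j _ => hedge j),
      Finset.sum_congr rfl (fun k hk => hIMpart k hk)]
    rw [← Finset.mul_sum, ← Finset.mul_sum,
      ← intervalIntegral.integral_finset_sum (fun j _ => hGint j),
      ← intervalIntegral.integral_finset_sum (fun k hk => (hHc k hk).intervalIntegrable 0 t)]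
    have h2 : (∫ x in (0:ℝ)..t, ∑ j : Fin N, G j x) + (∫ x in (0:ℝ)..t, ∑ k ∈ IM, H k x)
        = - ∑ k ∈ IS, ∫ τ in (0:ℝ)..t, (pt (y (jS k)) (a k (jS k)) τ)^2 := by
      rw [← intervalIntegral.integral_add
        ((continuous_finset_sum _ fun j _ => hGc j).intervalIntegrable 0 t)
        ((continuous_finset_sum _ fun k hk => hHc k hk).intervalIntegrable 0 t)]
      rw [intervalIntegral.integral_congr
        (g := fun τ => - ∑ k ∈ IS, (pt (y (jS k)) (a k (jS k)) τ)^2)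
        (fun τ hτ => key τ (by rw [uIcc_of_le ht] at hτ; exact hτ.1))]
      rw [intervalIntegral.integral_neg, intervalIntegral.integral_finset_sum hQint]
    linarith [h2]
  constructor
  · linarith [hmain]
  · have hnn : 0 ≤ ∑ k ∈ IS, ∫ τ in (0:ℝ)..t, (pt (y (jS k)) (a k (jS k)) τ)^2 :=
      Finset.sum_nonneg fun k _ =>
        intervalIntegral.integral_nonneg ht (fun τ _ => sq_nonneg _)
    linarith [hmain]
end

section
/- Let ℓ > 0 be an irrational real number, and let (p_n), (q_n) be sequences of positive integers with q_n → ∞ and |q_n ℓ − p_n| < 1/q_n for all n. Set β_n := 2π q_n + 2π q_n^{−1/4}. Then, as n → ∞: sin(β_n ℓ) − 2π ℓ q_n^{−1/4} = o(q_n^{−1/4}) and cos(β_n ℓ) − 1 = o(q_n^{−1/4}). -/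
open Real Filter

/-- for `ℓ > 0` irrational with Dirichlet approximations `|q_n ℓ − p_n| < 1/q_n`
and `β_n = 2π q_n + 2π q_n^{−1/4}`, one has `sin(β_n ℓ) = 2πℓ q_n^{−1/4} + o(q_n^{−1/4})` and
`cos(β_n ℓ) = 1 + o(q_n^{−1/4})`. -/
theorem stmt_6 (ℓ : ℝ) (hℓ : 0 < ℓ) (hirr : Irrational ℓ)
    (p q : ℕ → ℕ) (hp : ∀ n, 0 < p n) (hq : ∀ n, 0 < q n)
    (hqtop : Tendsto (fun n => (q n : ℝ)) atTop atTop)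
    (happrox : ∀ n, |(q n : ℝ) * ℓ - (p n : ℝ)| < 1 / (q n : ℝ))
    (β : ℕ → ℝ)
    (hβ : ∀ n, β n = 2*π*(q n : ℝ) + 2*π*((q n : ℝ) ^ (-(1/4 : ℝ)))) :
    Tendsto (fun n => (Real.sin (β n * ℓ) - 2*π*ℓ*((q n : ℝ) ^ (-(1/4 : ℝ))))
        / ((q n : ℝ) ^ (-(1/4 : ℝ)))) atTop (nhds 0)
    ∧ Tendsto (fun n => (Real.cos (β n * ℓ) - 1) / ((q n : ℝ) ^ (-(1/4 : ℝ))))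
        atTop (nhds 0) := by
  set r : ℕ → ℝ := fun n => (q n : ℝ) ^ (-(1/4 : ℝ)) with hr
  set e : ℕ → ℝ := fun n => (q n : ℝ) * ℓ - (p n : ℝ) with he
  set θ : ℕ → ℝ := fun n => 2*π*e n + 2*π*ℓ*r n with hθdef
  have hqpos : ∀ n, (0:ℝ) < (q n : ℝ) := fun n => by exact_mod_cast hq n
  have hrpos : ∀ n, 0 < r n := fun n => Real.rpow_pos_of_pos (hqpos n) _
  have hrne : ∀ n, r n ≠ 0 := fun n => (hrpos n).ne'
  have hβθ : ∀ n, β n * ℓ = θ n + (p n : ℝ) * (2*π) := by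
    intro n
    simp only [hβ, hθdef, he, hr]
    ring
  have hsin : ∀ n, Real.sin (β n * ℓ) = Real.sin (θ n) := by
    intro n; rw [hβθ n]; exact Real.sin_add_nat_mul_two_pi _ _
  have hcos : ∀ n, Real.cos (β n * ℓ) = Real.cos (θ n) := by
    intro n; rw [hβθ n]; exact Real.cos_add_nat_mul_two_pi _ _
  have hr0 : Tendsto r atTop (nhds 0) :=
    (tendsto_rpow_neg_atTop (by norm_num : (0:ℝ) < 1/4)).comp hqtop
  have he0 : Tendsto e atTop (nhds 0) := by
    apply squeeze_zero_norm (a := fun n => 1 / (q n : ℝ))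
    · intro n; exact le_of_lt (happrox n)
    · simpa [one_div, Pi.inv_def] using hqtop.inv_tendsto_atTop
  have her : Tendsto (fun n => e n / r n) atTop (nhds 0) := by
    apply squeeze_zero_norm (a := fun n => (q n : ℝ) ^ (-(3/4 : ℝ)))
    · intro n
      have h1 : |e n| ≤ (q n : ℝ) ^ (-(1:ℝ)) := by
        rw [Real.rpow_neg_one]
        exact le_of_lt (by simpa [one_div] using happrox n)
      have h2 : ‖e n / r n‖ = |e n| / r n := by
        rw [Real.norm_eq_abs, abs_div, abs_of_pos (hrpos n)]
      rw [h2, div_le_iff₀ (hrpos n)]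
      calc |e n| ≤ (q n : ℝ) ^ (-(1:ℝ)) := h1
        _ = (q n : ℝ) ^ (-(3/4:ℝ)) * r n := by
            rw [hr, ← Real.rpow_add (hqpos n)]; norm_num
    · exact (tendsto_rpow_neg_atTop (by norm_num : (0:ℝ) < 3/4)).comp hqtop
  have hθ0 : Tendsto θ atTop (nhds 0) := by
    have h := (he0.const_mul (2*π)).add (hr0.const_mul (2*π*ℓ))
    rw [mul_zero, mul_zero, add_zero] at h
    exact h
  have hθr_eq : ∀ n, θ n / r n = 2*π*(e n / r n) + 2*π*ℓ := by
    intro n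
    show (2*π*e n + 2*π*ℓ*r n) / r n = 2*π*(e n / r n) + 2*π*ℓ
    rw [add_div, mul_div_assoc, mul_div_assoc, div_self (hrne n), mul_one]
  have hθr : Tendsto (fun n => θ n / r n) atTop (nhds (2*π*ℓ)) := by
    simp only [hθr_eq]
    have h := (her.const_mul (2*π)).add_const (2*π*ℓ)
    simpa using h
  have hθne : ∀ᶠ n in atTop, θ n ≠ 0 := by
    have hpos : ∀ᶠ n in atTop, 0 < θ n / r n :=
      hθr.eventually (eventually_gt_nhds (by positivity))
    filter_upwards [hpos] with n hn h0
    rw [h0, zero_div] at hn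
    exact lt_irrefl 0 hn
  have hθ0' : Tendsto θ atTop (nhdsWithin (0:ℝ) {x | x ≠ 0}) := by
    rw [tendsto_nhdsWithin_iff]
    exact ⟨hθ0, hθne⟩
  have hsin_slope : Tendsto (fun n => Real.sin (θ n) / θ n) atTop (nhds 1) := by
    have h : Tendsto (slope Real.sin 0) (nhdsWithin (0:ℝ) {x | x ≠ 0}) (nhds (Real.cos 0)) :=
      hasDerivAt_iff_tendsto_slope.mp (Real.hasDerivAt_sin 0)
    have h2 := h.comp hθ0'
    rw [Real.cos_zero] at h2
    refine h2.congr fun n => ?_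
    simp [slope_def_field, Real.sin_zero]
  have hcos_slope : Tendsto (fun n => (Real.cos (θ n) - 1) / θ n) atTop (nhds 0) := by
    have h : Tendsto (slope Real.cos 0) (nhdsWithin (0:ℝ) {x | x ≠ 0}) (nhds (-Real.sin 0)) :=
      hasDerivAt_iff_tendsto_slope.mp (Real.hasDerivAt_cos 0)
    have h2 := h.comp hθ0'
    rw [Real.sin_zero, neg_zero] at h2
    refine h2.congr fun n => ?_
    simp [slope_def_field, Real.cos_zero]
  have key1 : Tendsto (fun n => (Real.sin (θ n) - θ n) / r n) atTop (nhds 0) := by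
    have h := ((hsin_slope.sub_const 1).mul hθr)
    have h0 : Tendsto (fun n => (Real.sin (θ n) / θ n - 1) * (θ n / r n)) atTop (nhds 0) := by
      simpa using h
    apply h0.congr'
    filter_upwards [hθne] with n hn
    field_simp
  have key2 : Tendsto (fun n => (Real.cos (θ n) - 1) / r n) atTop (nhds 0) := by
    have h := hcos_slope.mul hθr
    have h0 : Tendsto (fun n => ((Real.cos (θ n) - 1) / θ n) * (θ n / r n)) atTop (nhds 0) := by
      simpa using h
    apply h0.congr'
    filter_upwards [hθne] with n hn
    field_simp
  constructor
  · have h := key1.add (her.const_mul (2*π))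
    have h0 : Tendsto (fun n => (Real.sin (θ n) - θ n) / r n + 2*π*(e n / r n)) atTop (nhds 0) := by
      simpa using h
    refine h0.congr fun n => ?_
    rw [hsin n]
    have h1 : ((q n : ℝ) ^ (-(1/4:ℝ))) = r n := rfl
    have h2 : Real.sin (θ n) - 2*π*ℓ*(r n) = (Real.sin (θ n) - θ n) + 2*π*(e n) := by
      show _ = _ - (2*π*e n + 2*π*ℓ*r n) + _
      ring
    rw [h1, h2, add_div, mul_div_assoc]
  · have h0 := key2
    refine h0.congr fun n => ?_
    rw [hcos n]
end

section
/- Let ℓ > 0 be an irrational real number, and let (p_n), (q_n) be sequences of positive integers with q_n → ∞ and |q_n ℓ − p_n| < 1/q_n for all n. Set β_n := 2π q_n + 2π q_n^{−1/4}, and define complex sequences A_n := (1 + cos(β_n ℓ)) sin β_n + e^{−i β_n} sin(β_n ℓ); B_n := 2 − cos(β_n ℓ) cos β_n + i ( e^{−i β_n} sin(β_n ℓ) − sin β_n ); C_n := (1/(2 β_n²)) sin β_n − ( (1/2) sin β_n + (1/2)(−1 + i) cos β_n ) sin(β_n ℓ) + (1/(2 β_n)) cos β_n cos(β_n ℓ);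 F_n := e^{−i β_n} ( cos β_n − 1 ) − sin β_n sin(β_n ℓ); G_n := e^{−i β_n} ( cos β_n / sin β_n − 2 i ) − cos β_n sin(β_n ℓ) − i e^{−i β_n} cos(β_n ℓ); H_n := −(1/(2 β_n)) e^{−i β_n} − (1/(2 β_n)) cos β_n sin(β_n ℓ) − (1/2) sin β_n cos(β_n ℓ) − (1/2)(−1 + i) cos β_n cos(β_n ℓ). Then, as n → ∞: q_n^{1/4} A_n → 2π(2 + ℓ); B_n → 1; q_n^{1/4} C_n → (1 − i) π ℓ; q_n^{1/2} F_n → −2π²(2ℓ + 1); G_n − q_n^{1/4}/(2π) → −4 i; and H_n → (1 − i)/2. -/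
open Real Filter Complex

lemma aux_tsin {t x : ℕ → ℝ} {c : ℝ} (ht : ∀ n, 0 ≤ t n)
    (hx : Tendsto x atTop (nhds 0)) (htx : Tendsto (fun n => t n * x n) atTop (nhds c)) :
    Tendsto (fun n => t n * Real.sin (x n)) atTop (nhds c) := by
  have hsb : ∀ x : ℝ, |x| ≤ 1 → |Real.sin x - x| ≤ |x|^3 := by
    intro y hy
    have h := Real.sin_bound hy
    have h4 : |y|^4 ≤ |y|^3 := pow_le_pow_of_le_one (abs_nonneg y) hy (by norm_num)
    have h1 : |Real.sin y - y| ≤ |Real.sin y - (y - y^3/6)| + |y^3/6| := by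
      have e : Real.sin y - y = (Real.sin y - (y - y^3/6)) + (-(y^3/6)) := by ring
      rw [e]
      exact (abs_add_le _ _).trans (by rw [abs_neg])
    have h2 : |y^3/6| = |y|^3/6 := by rw [abs_div, _root_.abs_pow]; norm_num
    have h3 : (0:ℝ) ≤ |y|^3 := by positivity
    nlinarith [pow_le_pow_of_le_one (abs_nonneg y) hy (by norm_num : 3 ≤ 5)]
  have h0 : Tendsto (fun n => t n * (Real.sin (x n) - x n)) atTop (nhds 0) := by
    have hev1 : ∀ᶠ n in atTop, |x n| ≤ 1 := by
      have := (hx.abs).eventually_lt_const (by norm_num : |(0:ℝ)| < 1)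
      filter_upwards [this] with n h using h.le
    have hev2 : ∀ᶠ n in atTop, |t n * x n| ≤ |c| + 1 := by
      have := (htx.abs).eventually_lt_const (by linarith [abs_nonneg c] : |c| < |c| + 1)
      filter_upwards [this] with n h using h.le
    have hg : Tendsto (fun n => (|c|+1) * (x n * x n)) atTop (nhds 0) := by
      simpa using ((hx.mul hx).const_mul (|c|+1))
    refine squeeze_zero_norm' ?_ hg
    filter_upwards [hev1, hev2] with n h1 h2
    have hb := hsb (x n) h1
    have : ‖t n * (Real.sin (x n) - x n)‖ = t n * |Real.sin (x n) - x n| := by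
      rw [norm_mul, Real.norm_eq_abs, Real.norm_eq_abs, _root_.abs_of_nonneg (ht n)]
    rw [this]
    calc t n * |Real.sin (x n) - x n| ≤ t n * |x n|^3 := by
          exact mul_le_mul_of_nonneg_left hb (ht n)
      _ = |t n * x n| * (x n * x n) := by
          rw [abs_mul, _root_.abs_of_nonneg (ht n)]
          rw [pow_succ, pow_two, ← _root_.abs_mul_abs_self (x n)]
          ring
      _ ≤ (|c|+1) * (x n * x n) := by
          apply mul_le_mul_of_nonneg_right h2
          exact mul_self_nonneg _
  have := h0.add htx
  simp only [zero_add] at this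
  refine this.congr (fun n => ?_)
  ring

lemma aux_sin_bound (x : ℝ) (hx : |x| ≤ 1) : |Real.sin x - x| ≤ |x|^3 := by
  have h := Real.sin_bound hx
  have h4 : |x|^4 ≤ |x|^3 := pow_le_pow_of_le_one (abs_nonneg x) hx (by norm_num)
  have h1 : |Real.sin x - x| ≤ |Real.sin x - (x - x^3/6)| + |x^3/6| := by
    have : Real.sin x - x = (Real.sin x - (x - x^3/6)) + (-(x^3/6)) := by ring
    rw [this]
    exact (abs_add_le _ _).trans (by rw [abs_neg])
  have h2 : |x^3/6| = |x|^3/6 := by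
    rw [abs_div, _root_.abs_pow]; norm_num
  have h3 : (0:ℝ) ≤ |x|^3 := by positivity
  nlinarith [pow_le_pow_of_le_one (abs_nonneg x) hx (by norm_num : 3 ≤ 5)]

lemma aux_cos_bound (x : ℝ) (hx : |x| ≤ 1) : |Real.cos x - (1 - x^2/2)| ≤ x^4 := by
  have h := Real.cos_bound hx
  have h2 : |x|^4 = x^4 := by
    rw [← _root_.abs_pow]; exact _root_.abs_of_nonneg (by positivity)
  nlinarith [pow_nonneg (abs_nonneg x) 4]

lemma aux_cos_one_bound (x : ℝ) : |Real.cos x - 1| ≤ x^2/2 := by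
  refine abs_le.2 ⟨?_, ?_⟩
  · nlinarith [Real.one_sub_sq_div_two_le_cos (x := x)]
  · nlinarith [Real.cos_le_one x, sq_nonneg x]

lemma aux_cot_bound (x : ℝ) (h0 : 0 < x) (h1 : x ≤ 1/2) :
    |Real.cos x/Real.sin x - 1/x| ≤ 2*x := by
  have hxabs : |x| ≤ 1 := by rw [abs_of_pos h0]; linarith
  have hsb := aux_sin_bound x hxabs
  rw [abs_of_pos h0] at hsb
  have hs : x - x^3 ≤ Real.sin x := by
    have := abs_le.1 hsb
    linarith [this.1]
  have hx2 : x^2 ≤ 1/4 := by nlinarith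
  have hcube : x^3 ≤ x/4 := by nlinarith [mul_le_mul_of_nonneg_left hx2 h0.le]
  have hspos : 0 < Real.sin x := by nlinarith
  have key : Real.cos x/Real.sin x - 1/x = (x*Real.cos x - Real.sin x)/(x*Real.sin x) := by
    field_simp
  rw [key, abs_div]
  have hnum : |x*Real.cos x - Real.sin x| ≤ (3/2)*x^3 := by
    have hc := aux_cos_one_bound x
    have e : x*Real.cos x - Real.sin x = x*(Real.cos x - 1) + (-(Real.sin x - x)) := by ring
    rw [e]
    have := abs_add_le (x*(Real.cos x - 1)) (-(Real.sin x - x))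
    rw [abs_neg, abs_mul, abs_of_pos h0] at this
    nlinarith
  have hdenpos : 0 < |x*Real.sin x| := by positivity
  have hden : (3/4)*x^2 ≤ |x*Real.sin x| := by
    rw [_root_.abs_of_pos (by positivity)]
    nlinarith [mul_le_mul_of_nonneg_left hs h0.le, mul_le_mul_of_nonneg_left hx2 (sq_nonneg x)]
  rw [div_le_iff₀ hdenpos]
  nlinarith [abs_nonneg (x*Real.cos x - Real.sin x)]
/-- asymptotics of the coefficients `A, B, C, F, G, H` appearing in the
non-exponential-stability proof for the circuit, along `β_n = 2π q_n + 2π q_n^{−1/4}`. -/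
theorem stmt_7 (ℓ : ℝ) (hℓ : 0 < ℓ) (hirr : Irrational ℓ)
    (p q : ℕ → ℕ) (hp : ∀ n, 0 < p n) (hq : ∀ n, 0 < q n)
    (hqtop : Tendsto (fun n => (q n : ℝ)) atTop atTop)
    (happrox : ∀ n, |(q n : ℝ) * ℓ - (p n : ℝ)| < 1 / (q n : ℝ))
    (β : ℕ → ℝ)
    (hβ : ∀ n, β n = 2*π*(q n : ℝ) + 2*π*((q n : ℝ) ^ (-(1/4 : ℝ))))
    (A B C F G H : ℕ → ℂ)
    (hA : ∀ n, A n = ((1 + Real.cos (β n * ℓ)) * Real.sin (β n) : ℝ)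
        + Complex.exp (-Complex.I * (β n : ℂ)) * (Real.sin (β n * ℓ) : ℝ))
    (hB : ∀ n, B n = 2 - ((Real.cos (β n * ℓ) * Real.cos (β n) : ℝ) : ℂ)
        + Complex.I * (Complex.exp (-Complex.I * (β n : ℂ)) * (Real.sin (β n * ℓ) : ℝ)
            - (Real.sin (β n) : ℝ)))
    (hC : ∀ n, C n = ((1/(2*(β n)^2) * Real.sin (β n) : ℝ) : ℂ)
        - (((1/2) * Real.sin (β n) : ℝ) + (1/2) * (-1 + Complex.I) * (Real.cos (β n) : ℝ))
            * (Real.sin (β n * ℓ) : ℝ)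
        + ((1/(2*β n) * Real.cos (β n) * Real.cos (β n * ℓ) : ℝ) : ℂ))
    (hF : ∀ n, F n = Complex.exp (-Complex.I * (β n : ℂ)) * ((Real.cos (β n) : ℝ) - 1)
        - ((Real.sin (β n) * Real.sin (β n * ℓ) : ℝ) : ℂ))
    (hG : ∀ n, G n = Complex.exp (-Complex.I * (β n : ℂ))
            * (((Real.cos (β n) / Real.sin (β n) : ℝ) : ℂ) - 2*Complex.I)
        - ((Real.cos (β n) * Real.sin (β n * ℓ) : ℝ) : ℂ)
        - Complex.I * Complex.exp (-Complex.I * (β n : ℂ)) * (Real.cos (β n * ℓ) : ℝ))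
    (hH : ∀ n, H n = -((1/(2*β n) : ℝ) : ℂ) * Complex.exp (-Complex.I * (β n : ℂ))
        - ((1/(2*β n) * Real.cos (β n) * Real.sin (β n * ℓ) : ℝ) : ℂ)
        - (((1/2) * Real.sin (β n) * Real.cos (β n * ℓ) : ℝ) : ℂ)
        - (1/2) * (-1 + Complex.I) * ((Real.cos (β n) * Real.cos (β n * ℓ) : ℝ) : ℂ)) :
    Tendsto (fun n => (((q n : ℝ) ^ ((1/4 : ℝ)) : ℝ) : ℂ) * A n) atTop
        (nhds ((2*π*(2 + ℓ) : ℝ) : ℂ))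
    ∧ Tendsto B atTop (nhds 1)
    ∧ Tendsto (fun n => (((q n : ℝ) ^ ((1/4 : ℝ)) : ℝ) : ℂ) * C n) atTop
        (nhds ((1 - Complex.I) * ((π*ℓ : ℝ) : ℂ)))
    ∧ Tendsto (fun n => (((q n : ℝ) ^ ((1/2 : ℝ)) : ℝ) : ℂ) * F n) atTop
        (nhds ((-2*π^2*(2*ℓ + 1) : ℝ) : ℂ))
    ∧ Tendsto (fun n => G n - (((q n : ℝ) ^ ((1/4 : ℝ)) : ℝ) : ℂ)/(2*π)) atTop
        (nhds (-4*Complex.I))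
    ∧ Tendsto H atTop (nhds ((1 - Complex.I)/2)) := by
  have hπ : (0:ℝ) < π := Real.pi_pos
  have hqpos : ∀ n, (0:ℝ) < q n := fun n => by exact_mod_cast hq n
  obtain ⟨t, ht_def⟩ : ∃ t : ℕ → ℝ, ∀ n, t n = (q n : ℝ) ^ ((1/4:ℝ)) := ⟨_, fun n => rfl⟩
  obtain ⟨s, hs_def⟩ : ∃ s : ℕ → ℝ, ∀ n, s n = (q n : ℝ) ^ ((1/2:ℝ)) := ⟨_, fun n => rfl⟩
  obtain ⟨ε, hε_def⟩ : ∃ ε : ℕ → ℝ, ∀ n, ε n = 2*π*((q n : ℝ) ^ (-(1/4 : ℝ))) :=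
    ⟨_, fun n => rfl⟩
  obtain ⟨δ, hδ_def⟩ : ∃ δ : ℕ → ℝ, ∀ n, δ n = (q n : ℝ)*ℓ - (p n : ℝ) := ⟨_, fun n => rfl⟩
  obtain ⟨η, hη_def⟩ : ∃ η : ℕ → ℝ, ∀ n, η n = 2*π*(δ n) + ε n * ℓ := ⟨_, fun n => rfl⟩
  have htpos : ∀ n, 0 < t n := fun n => by
    rw [ht_def n]; exact Real.rpow_pos_of_pos (hqpos n) _
  have hεpos : ∀ n, 0 < ε n := fun n => by
    have h := hqpos n
    rw [hε_def n]
    positivity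
  have hrpow : ∀ n, (q n:ℝ) ^ ((1/4:ℝ)) * ((q n:ℝ) ^ (-(1/4:ℝ))) = 1 := fun n => by
    rw [← Real.rpow_add (hqpos n)]
    norm_num
  have htε : ∀ n, t n * ε n = 2*π := fun n => by
    rw [ht_def n, hε_def n]
    linear_combination 2*π*(hrpow n)
  have hst : ∀ n, s n = t n * t n := fun n => by
    rw [hs_def n, ht_def n, ← Real.rpow_add (hqpos n)]
    norm_num
  have hβε : ∀ n, β n = 2*π*(q n:ℝ) + ε n := fun n => by rw [hβ n, hε_def n]
  have hβpos : ∀ n, 0 < β n := fun n => by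
    rw [hβε n]
    have h1 := hεpos n
    have h2 := hqpos n
    positivity
  -- trig rewrites
  have hsinβ : ∀ n, Real.sin (β n) = Real.sin (ε n) := fun n => by
    rw [hβε n, show 2*π*(q n:ℝ) + ε n = ε n + (q n:ℝ)*(2*π) by ring,
      Real.sin_add_nat_mul_two_pi]
  have hcosβ : ∀ n, Real.cos (β n) = Real.cos (ε n) := fun n => by
    rw [hβε n, show 2*π*(q n:ℝ) + ε n = ε n + (q n:ℝ)*(2*π) by ring,
      Real.cos_add_nat_mul_two_pi]
  have hβℓ : ∀ n, β n * ℓ = η n + (p n:ℝ)*(2*π) := fun n => by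
    rw [hβε n, hη_def n, hδ_def n]
    ring
  have hsinβℓ : ∀ n, Real.sin (β n * ℓ) = Real.sin (η n) := fun n => by
    rw [hβℓ n, Real.sin_add_nat_mul_two_pi]
  have hcosβℓ : ∀ n, Real.cos (β n * ℓ) = Real.cos (η n) := fun n => by
    rw [hβℓ n, Real.cos_add_nat_mul_two_pi]
  have hexpβ : ∀ n, Complex.exp (-Complex.I * (β n:ℂ)) = Complex.exp (-Complex.I * (ε n:ℂ)) :=
    fun n => by
      have h1 : Complex.exp ((((-(q n:ℤ)) : ℤ):ℂ) * (2*(π:ℂ)*Complex.I)) = 1 :=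
        Complex.exp_int_mul_two_pi_mul_I _
      have e : -Complex.I*(β n:ℂ)
          = -Complex.I*(ε n:ℂ) + (((-(q n:ℤ)) : ℤ):ℂ) * (2*(π:ℂ)*Complex.I) := by
        rw [hβε n]
        push_cast
        ring
      rw [e, Complex.exp_add, h1, mul_one]
  -- basic limits
  have hε0 : Tendsto ε atTop (nhds 0) := by
    have h1 : Tendsto (fun n => (q n:ℝ)^(-(1/4:ℝ))) atTop (nhds 0) :=
      (tendsto_rpow_neg_atTop (by norm_num)).comp hqtop
    have h2 := h1.const_mul (2*π)
    rw [mul_zero] at h2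
    exact h2.congr (fun n => (hε_def n).symm)
  have hδ0 : Tendsto δ atTop (nhds 0) := by
    have hg : Tendsto (fun n => 1/(q n:ℝ)) atTop (nhds 0) := by
      simp only [one_div]
      exact tendsto_inv_atTop_zero.comp hqtop
    refine squeeze_zero_norm (fun n => ?_) hg
    rw [Real.norm_eq_abs, hδ_def n]
    exact (happrox n).le
  have hq34 : Tendsto (fun n => (q n:ℝ)^(-(3/4:ℝ))) atTop (nhds 0) :=
    (tendsto_rpow_neg_atTop (by norm_num)).comp hqtop
  have httimes : ∀ n, t n * (1/(q n:ℝ)) = (q n:ℝ)^(-(3/4:ℝ)) := fun n => by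
    have h1 : (1:ℝ)/(q n:ℝ) = (q n:ℝ)^(-(1:ℝ)) := by
      rw [Real.rpow_neg_one, one_div]
    rw [ht_def n, h1, ← Real.rpow_add (hqpos n)]
    norm_num
  have htδ : Tendsto (fun n => t n * δ n) atTop (nhds 0) := by
    refine squeeze_zero_norm (fun n => ?_) hq34
    rw [Real.norm_eq_abs, abs_mul, _root_.abs_of_nonneg (htpos n).le, ← httimes n]
    refine mul_le_mul_of_nonneg_left ?_ (htpos n).le
    rw [hδ_def n]
    exact (happrox n).le
  have hη0 : Tendsto η atTop (nhds 0) := by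
    have h := (hδ0.const_mul (2*π)).add (hε0.mul_const ℓ)
    rw [show 2*π*0 + 0*ℓ = (0:ℝ) by ring] at h
    exact h.congr (fun n => (hη_def n).symm)
  have htη : Tendsto (fun n => t n * η n) atTop (nhds (2*π*ℓ)) := by
    have h2 := (htδ.const_mul (2*π)).add_const (2*π*ℓ)
    rw [show 2*π*0 + 2*π*ℓ = 2*π*ℓ by ring] at h2
    refine h2.congr (fun n => ?_)
    rw [hη_def n]
    linear_combination -ℓ * htε n
  have hsinε : Tendsto (fun n => t n * Real.sin (ε n)) atTop (nhds (2*π)) := by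
    refine aux_tsin (fun n => (htpos n).le) hε0 ?_
    exact tendsto_const_nhds.congr (fun n => (htε n).symm)
  have hsinη : Tendsto (fun n => t n * Real.sin (η n)) atTop (nhds (2*π*ℓ)) :=
    aux_tsin (fun n => (htpos n).le) hη0 htη
  have rsinε : Tendsto (fun n => Real.sin (ε n)) atTop (nhds 0) := by
    have h := (Real.continuous_sin.tendsto 0).comp hε0
    rw [Real.sin_zero] at h
    exact h
  have rcosε : Tendsto (fun n => Real.cos (ε n)) atTop (nhds 1) := by
    have h := (Real.continuous_cos.tendsto 0).comp hε0
    rw [Real.cos_zero] at h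
    exact h
  have rsinη : Tendsto (fun n => Real.sin (η n)) atTop (nhds 0) := by
    have h := (Real.continuous_sin.tendsto 0).comp hη0
    rw [Real.sin_zero] at h
    exact h
  have rcosη : Tendsto (fun n => Real.cos (η n)) atTop (nhds 1) := by
    have h := (Real.continuous_cos.tendsto 0).comp hη0
    rw [Real.cos_zero] at h
    exact h
  have hexp1 : Tendsto (fun n => Complex.exp (-Complex.I * (ε n:ℂ))) atTop (nhds 1) := by
    have hc : Continuous fun x:ℝ => Complex.exp (-Complex.I*(x:ℂ)) :=
      Complex.continuous_exp.comp (continuous_const.mul Complex.continuous_ofReal)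
    have h := (hc.tendsto 0).comp hε0
    rw [show Complex.exp (-Complex.I*((0:ℝ):ℂ)) = 1 by simp] at h
    exact h
  have castC : ∀ (f : ℕ → ℝ) (a : ℝ), Tendsto f atTop (nhds a) →
      Tendsto (fun n => ((f n : ℝ):ℂ)) atTop (nhds ((a:ℝ):ℂ)) := fun f a h =>
    (Complex.continuous_ofReal.tendsto a).comp h
  have hexpdiv : Tendsto (fun n => (Complex.exp (-Complex.I*(ε n:ℂ)) - 1)/((ε n:ℝ):ℂ)) atTop
      (nhds (-Complex.I)) := by
    rw [tendsto_iff_norm_sub_tendsto_zero]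
    refine squeeze_zero_norm' ?_ hε0
    have hev : ∀ᶠ n in atTop, ε n < 1 := hε0.eventually_lt_const (by norm_num)
    filter_upwards [hev] with n h1
    have hne : ((ε n:ℝ):ℂ) ≠ 0 := Complex.ofReal_ne_zero.2 (hεpos n).ne'
    have e : (Complex.exp (-Complex.I*(ε n:ℂ)) - 1)/((ε n:ℝ):ℂ) - (-Complex.I)
        = (Complex.exp (-Complex.I*(ε n:ℂ)) - 1 - (-Complex.I*(ε n:ℂ)))/((ε n:ℝ):ℂ) := by
      field_simp
    rw [Real.norm_eq_abs, _root_.abs_of_nonneg (norm_nonneg _), e, norm_div]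
    have habs : ‖-Complex.I*(ε n:ℂ)‖ = ε n := by
      rw [norm_mul]
      simp [_root_.abs_of_nonneg (hεpos n).le]
    have hb := Complex.norm_exp_sub_one_sub_id_le (x := -Complex.I*(ε n:ℂ))
      (by rw [habs]; exact h1.le)
    rw [habs] at hb
    rw [Complex.norm_real, Real.norm_eq_abs,
      _root_.abs_of_nonneg (hεpos n).le]
    rw [div_le_iff₀ (hεpos n)]
    refine hb.trans (le_of_eq ?_)
    ring
  have hcot0 : Tendsto (fun n => Real.cos (ε n)/Real.sin (ε n) - 1/(ε n)) atTop (nhds 0) := by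
    have hg2 := hε0.const_mul (2:ℝ)
    rw [mul_zero] at hg2
    refine squeeze_zero_norm' ?_ hg2
    have hev : ∀ᶠ n in atTop, ε n < 1/2 := hε0.eventually_lt_const (by norm_num)
    filter_upwards [hev] with n h
    rw [Real.norm_eq_abs]
    exact (aux_cot_bound (ε n) (hεpos n) h.le).trans (by rw [mul_comm])
  have hβtop : Tendsto β atTop atTop := by
    refine tendsto_atTop_mono (fun n => ?_) (hqtop.const_mul_atTop (by positivity : (0:ℝ) < 2*π))
    rw [hβε n]
    nlinarith [hεpos n]
  have hinv2β : Tendsto (fun n => 1/(2*β n)) atTop (nhds 0) := by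
    have h2β : Tendsto (fun n => 2*β n) atTop atTop := hβtop.const_mul_atTop two_pos
    have h := h2β.inv_tendsto_atTop
    exact h.congr (fun n => (one_div _).symm)
  have htβ : Tendsto (fun n => t n/(2*β n)) atTop (nhds 0) := by
    have hg : Tendsto (fun n => (1/(4*π)) * (q n:ℝ)^(-(3/4:ℝ))) atTop (nhds 0) := by
      have h := hq34.const_mul (1/(4*π))
      rw [mul_zero] at h
      exact h
    refine squeeze_zero_norm (fun n => ?_) hg
    have hb := hβpos n
    rw [Real.norm_eq_abs, abs_div, _root_.abs_of_nonneg (htpos n).le,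
      _root_.abs_of_nonneg (by linarith : (0:ℝ) ≤ 2*β n)]
    have h1 : t n/(2*β n) ≤ t n/(2*(2*π*(q n:ℝ))) := by
      refine div_le_div_of_nonneg_left (htpos n).le (by have := hqpos n; positivity) ?_
      rw [hβε n]
      nlinarith [hεpos n]
    refine h1.trans (le_of_eq ?_)
    rw [← httimes n]
    ring
  have hC1 : Tendsto (fun n => t n * (1/(2*(β n)^2) * Real.sin (ε n))) atTop (nhds 0) := by
    refine squeeze_zero_norm' ?_ htβ
    have hev : ∀ᶠ n in atTop, (1:ℝ) ≤ β n := hβtop.eventually_ge_atTop 1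
    filter_upwards [hev] with n h1
    have hb := hβpos n
    have hsle : |Real.sin (ε n)| ≤ 1 := abs_le.2 ⟨Real.neg_one_le_sin _, Real.sin_le_one _⟩
    rw [Real.norm_eq_abs, abs_mul, abs_mul, _root_.abs_of_nonneg (htpos n).le,
      _root_.abs_of_nonneg (by positivity : (0:ℝ) ≤ 1/(2*(β n)^2))]
    calc t n * (1/(2*(β n)^2) * |Real.sin (ε n)|) ≤ t n * (1/(2*(β n)^2) * 1) := by
          refine mul_le_mul_of_nonneg_left (mul_le_mul_of_nonneg_left hsle (by positivity)) (htpos n).le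
      _ = t n / (2*(β n)^2) := by ring
      _ ≤ t n/(2*β n) := by
          refine div_le_div_of_nonneg_left (htpos n).le (by positivity) ?_
          nlinarith
  have hcosF : Tendsto (fun n => s n * (Real.cos (ε n) - 1)) atTop (nhds (-(2*π^2))) := by
    have hsε2 : ∀ n, s n * (ε n)^2 = 4*π^2 := fun n => by
      rw [hst n]
      linear_combination (t n * ε n + 2*π) * htε n
    have hg : Tendsto (fun n => s n * (Real.cos (ε n) - (1 - (ε n)^2/2))) atTop (nhds 0) := by
      have hg2 : Tendsto (fun n => 4*π^2*(ε n * ε n)) atTop (nhds 0) := by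
        have h := (hε0.mul hε0).const_mul (4*π^2)
        rw [show 4*π^2*((0:ℝ)*0) = 0 by ring] at h
        exact h
      refine squeeze_zero_norm' ?_ hg2
      have hev : ∀ᶠ n in atTop, ε n < 1 := hε0.eventually_lt_const (by norm_num)
      filter_upwards [hev] with n h1
      have hspos : 0 ≤ s n := by rw [hs_def n]; positivity
      rw [Real.norm_eq_abs, abs_mul, _root_.abs_of_nonneg hspos]
      have hcb := aux_cos_bound (ε n) (by rw [_root_.abs_of_nonneg (hεpos n).le]; exact h1.le)
      calc s n * |Real.cos (ε n) - (1 - (ε n)^2/2)| ≤ s n * (ε n)^4 :=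
            mul_le_mul_of_nonneg_left hcb hspos
        _ = (s n * (ε n)^2) * (ε n * ε n) := by ring
        _ = 4*π^2*(ε n * ε n) := by rw [hsε2 n]
    have h := hg.sub_const (2*π^2)
    rw [zero_sub] at h
    refine h.congr (fun n => ?_)
    linear_combination (hsε2 n)/2
  refine ⟨?_, ?_, ?_, ?_, ?_, ?_⟩
  -- PART A
  · have key : ∀ n, ((t n:ℝ):ℂ) * A n
        = (((1 + Real.cos (η n)) * (t n * Real.sin (ε n)) : ℝ) : ℂ)
          + Complex.exp (-Complex.I*(ε n:ℂ)) * ((t n * Real.sin (η n) : ℝ):ℂ) := fun n => by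
      rw [hA n, hsinβ n, hsinβℓ n, hcosβℓ n, hexpβ n]
      push_cast
      ring
    have lim : Tendsto (fun n => (((1 + Real.cos (η n)) * (t n * Real.sin (ε n)) : ℝ) : ℂ)
          + Complex.exp (-Complex.I*(ε n:ℂ)) * ((t n * Real.sin (η n) : ℝ):ℂ)) atTop
        (nhds ((((1+1)*(2*π) : ℝ):ℂ) + 1 * ((2*π*ℓ:ℝ):ℂ))) := by
      refine Tendsto.add ?_ (hexp1.mul (castC _ _ hsinη))
      refine castC _ _ (Tendsto.mul ?_ hsinε)
      have h := rcosη.const_add (1:ℝ)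
      simpa using h
    have hval : ((2*π*(2 + ℓ) : ℝ) : ℂ) = (((1+1)*(2*π) : ℝ):ℂ) + 1 * ((2*π*ℓ:ℝ):ℂ) := by
      push_cast
      ring
    rw [hval]
    refine (lim.congr (fun n => (key n).symm)).congr (fun n => ?_)
    rw [ht_def n]
  -- PART B
  · have key : ∀ n, B n = 2 - ((Real.cos (η n) * Real.cos (ε n) : ℝ) : ℂ)
        + Complex.I * (Complex.exp (-Complex.I*(ε n:ℂ)) * ((Real.sin (η n) : ℝ):ℂ)
          - ((Real.sin (ε n) : ℝ):ℂ)) := fun n => by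
      rw [hB n, hsinβ n, hsinβℓ n, hcosβℓ n, hcosβ n, hexpβ n]
    have lim : Tendsto (fun n => 2 - ((Real.cos (η n) * Real.cos (ε n) : ℝ) : ℂ)
        + Complex.I * (Complex.exp (-Complex.I*(ε n:ℂ)) * ((Real.sin (η n) : ℝ):ℂ)
          - ((Real.sin (ε n) : ℝ):ℂ))) atTop
        (nhds (2 - ((1*1:ℝ):ℂ) + Complex.I * (1 * ((0:ℝ):ℂ) - ((0:ℝ):ℂ)))) := by
      refine Tendsto.add (tendsto_const_nhds.sub (castC _ _ (rcosη.mul rcosε))) ?_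
      exact ((hexp1.mul (castC _ _ rsinη)).sub (castC _ _ rsinε)).const_mul Complex.I
    have hval : (1:ℂ) = 2 - ((1*1:ℝ):ℂ) + Complex.I * (1 * ((0:ℝ):ℂ) - ((0:ℝ):ℂ)) := by
      push_cast
      ring
    rw [hval]
    exact lim.congr (fun n => (key n).symm)
  -- PART C
  · have key : ∀ n, ((t n:ℝ):ℂ) * C n
        = ((t n * (1/(2*(β n)^2) * Real.sin (ε n)) : ℝ):ℂ)
          - ((((1/2) * Real.sin (ε n) : ℝ):ℂ)
              + 1/2*(-1+Complex.I)*((Real.cos (ε n) : ℝ):ℂ)) * ((t n * Real.sin (η n) : ℝ):ℂ)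
          + ((t n/(2*β n) * (Real.cos (ε n) * Real.cos (η n)) : ℝ):ℂ) := fun n => by
      rw [hC n, hsinβ n, hsinβℓ n, hcosβℓ n, hcosβ n]
      push_cast
      ring
    have lim : Tendsto (fun n => ((t n * (1/(2*(β n)^2) * Real.sin (ε n)) : ℝ):ℂ)
          - ((((1/2) * Real.sin (ε n) : ℝ):ℂ)
              + 1/2*(-1+Complex.I)*((Real.cos (ε n) : ℝ):ℂ)) * ((t n * Real.sin (η n) : ℝ):ℂ)
          + ((t n/(2*β n) * (Real.cos (ε n) * Real.cos (η n)) : ℝ):ℂ)) atTop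
        (nhds (((0:ℝ):ℂ)
          - ((((1/2) * 0 : ℝ):ℂ) + 1/2*(-1+Complex.I)*((1:ℝ):ℂ)) * ((2*π*ℓ:ℝ):ℂ)
          + ((0 * (1*1) : ℝ):ℂ))) := by
      refine Tendsto.add (Tendsto.sub (castC _ _ hC1) ?_)
        (castC _ _ (htβ.mul (rcosε.mul rcosη)))
      refine Tendsto.mul (Tendsto.add ?_ ((castC _ _ rcosε).const_mul (1/2*(-1+Complex.I))))
        (castC _ _ hsinη)
      exact castC _ _ (rsinε.const_mul (1/2))
    have hval : (1 - Complex.I) * ((π*ℓ : ℝ) : ℂ) = ((0:ℝ):ℂ)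
          - ((((1/2) * 0 : ℝ):ℂ) + 1/2*(-1+Complex.I)*((1:ℝ):ℂ)) * ((2*π*ℓ:ℝ):ℂ)
          + ((0 * (1*1) : ℝ):ℂ) := by
      push_cast
      ring
    rw [hval]
    refine (lim.congr (fun n => (key n).symm)).congr (fun n => ?_)
    rw [ht_def n]
  -- PART F
  · have key : ∀ n, ((s n:ℝ):ℂ) * F n
        = Complex.exp (-Complex.I*(ε n:ℂ)) * ((s n * (Real.cos (ε n) - 1) : ℝ):ℂ)
          - ((t n * Real.sin (ε n) : ℝ):ℂ) * ((t n * Real.sin (η n) : ℝ):ℂ) := fun n => by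
      rw [hF n, hcosβ n, hsinβ n, hsinβℓ n, hexpβ n]
      have hsc : ((s n:ℝ):ℂ) = ((t n:ℝ):ℂ)*((t n:ℝ):ℂ) := by
        rw [hst n]
        push_cast
        ring
      push_cast
      rw [hsc]
      push_cast
      ring
    have lim : Tendsto (fun n =>
          Complex.exp (-Complex.I*(ε n:ℂ)) * ((s n * (Real.cos (ε n) - 1) : ℝ):ℂ)
          - ((t n * Real.sin (ε n) : ℝ):ℂ) * ((t n * Real.sin (η n) : ℝ):ℂ)) atTop
        (nhds (1 * ((-(2*π^2):ℝ):ℂ) - ((2*π:ℝ):ℂ) * ((2*π*ℓ:ℝ):ℂ))) :=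
      (hexp1.mul (castC _ _ hcosF)).sub ((castC _ _ hsinε).mul (castC _ _ hsinη))
    have hval : ((-2*π^2*(2*ℓ + 1) : ℝ) : ℂ)
        = 1 * ((-(2*π^2):ℝ):ℂ) - ((2*π:ℝ):ℂ) * ((2*π*ℓ:ℝ):ℂ) := by
      push_cast
      ring
    rw [hval]
    refine (lim.congr (fun n => (key n).symm)).congr (fun n => ?_)
    rw [hs_def n]
  -- PART G
  · have key : ∀ n, G n - ((t n:ℝ):ℂ)/(2*π)
        = Complex.exp (-Complex.I*(ε n:ℂ)) * ((Real.cos (ε n)/Real.sin (ε n) - 1/(ε n) : ℝ):ℂ)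
          + (Complex.exp (-Complex.I*(ε n:ℂ)) - 1)/((ε n:ℝ):ℂ)
          - 2*Complex.I*Complex.exp (-Complex.I*(ε n:ℂ))
          - ((Real.cos (ε n) * Real.sin (η n) : ℝ):ℂ)
          - Complex.I*Complex.exp (-Complex.I*(ε n:ℂ)) * ((Real.cos (η n) : ℝ):ℂ) := fun n => by
      have h1 : t n/(2*π) = 1/(ε n) := by
        rw [div_eq_div_iff (by positivity) (hεpos n).ne']
        linarith [htε n]
      have h1c : ((t n:ℝ):ℂ)/(2*(π:ℂ)) = 1/((ε n:ℝ):ℂ) := by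
        have h2 := congrArg (fun x:ℝ => (x:ℂ)) h1
        push_cast at h2
        convert h2 using 2
      rw [hG n, hsinβ n, hcosβ n, hsinβℓ n, hcosβℓ n, hexpβ n, h1c]
      push_cast
      ring
    have lim : Tendsto (fun n =>
          Complex.exp (-Complex.I*(ε n:ℂ)) * ((Real.cos (ε n)/Real.sin (ε n) - 1/(ε n) : ℝ):ℂ)
          + (Complex.exp (-Complex.I*(ε n:ℂ)) - 1)/((ε n:ℝ):ℂ)
          - 2*Complex.I*Complex.exp (-Complex.I*(ε n:ℂ))
          - ((Real.cos (ε n) * Real.sin (η n) : ℝ):ℂ)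
          - Complex.I*Complex.exp (-Complex.I*(ε n:ℂ)) * ((Real.cos (η n) : ℝ):ℂ)) atTop
        (nhds (1 * ((0:ℝ):ℂ) + (-Complex.I) - 2*Complex.I*1 - ((1*0:ℝ):ℂ)
          - Complex.I*1*((1:ℝ):ℂ))) := by
      refine Tendsto.sub (Tendsto.sub (Tendsto.sub
        (Tendsto.add (hexp1.mul (castC _ _ hcot0)) hexpdiv)
        (hexp1.const_mul (2*Complex.I))) (castC _ _ (rcosε.mul rsinη))) ?_
      exact (hexp1.const_mul Complex.I).mul (castC _ _ rcosη)
    have hval : (-4*Complex.I : ℂ)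
        = 1 * ((0:ℝ):ℂ) + (-Complex.I) - 2*Complex.I*1 - ((1*0:ℝ):ℂ)
          - Complex.I*1*((1:ℝ):ℂ) := by
      push_cast
      ring
    rw [hval]
    refine (lim.congr (fun n => (key n).symm)).congr (fun n => ?_)
    rw [ht_def n]
  -- PART H
  · have key : ∀ n, H n = -((1/(2*β n) : ℝ):ℂ) * Complex.exp (-Complex.I*(ε n:ℂ))
        - ((1/(2*β n) * Real.cos (ε n) * Real.sin (η n) : ℝ):ℂ)
        - (((1/2) * Real.sin (ε n) * Real.cos (η n) : ℝ):ℂ)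
        - (1/2)*(-1+Complex.I)*((Real.cos (ε n) * Real.cos (η n) : ℝ):ℂ) := fun n => by
      rw [hH n, hsinβ n, hcosβ n, hsinβℓ n, hcosβℓ n, hexpβ n]
    have lim : Tendsto (fun n => -((1/(2*β n) : ℝ):ℂ) * Complex.exp (-Complex.I*(ε n:ℂ))
        - ((1/(2*β n) * Real.cos (ε n) * Real.sin (η n) : ℝ):ℂ)
        - (((1/2) * Real.sin (ε n) * Real.cos (η n) : ℝ):ℂ)
        - (1/2)*(-1+Complex.I)*((Real.cos (ε n) * Real.cos (η n) : ℝ):ℂ)) atTop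
        (nhds (-((0:ℝ):ℂ) * 1 - ((0 * 1 * 0 : ℝ):ℂ) - (((1/2) * 0 * 1 : ℝ):ℂ)
          - (1/2)*(-1+Complex.I)*((1*1:ℝ):ℂ))) := by
      refine Tendsto.sub (Tendsto.sub (Tendsto.sub ?_
        (castC _ _ ((hinv2β.mul rcosε).mul rsinη)))
        (castC _ _ ((rsinε.const_mul (1/2)).mul rcosη))) ?_
      · exact (castC _ _ hinv2β).neg.mul hexp1
      · exact (castC _ _ (rcosε.mul rcosη)).const_mul ((1/2)*(-1+Complex.I))
    have hval : ((1 - Complex.I)/2 : ℂ)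
        = -((0:ℝ):ℂ) * 1 - ((0 * 1 * 0 : ℝ):ℂ) - (((1/2) * 0 * 1 : ℝ):ℂ)
          - (1/2)*(-1+Complex.I)*((1*1:ℝ):ℂ) := by
      push_cast
      ring
    rw [hval]
    exact lim.congr (fun n => (key n).symm)
end

section
/- Let x : ℕ → ℝ and c : ℕ → ℝ, and define sequences Δ, M by Δ₂ := sin x₂, M₂ := −cos x₂, and for N ≥ 3: Δ_N := (−cos x_N + c_N sin x_N) Δ_{N−1} + (sin x_N) M_{N−1} and M_N := (−sin x_N − c_N cos x_N) Δ_{N−1} − (cos x_N) M_{N−1}. Then for every N ≥ 2, Δ_N = Σ_{s=0}^{N−2} (−1)^{N+s} Σ_{2 = j₀ < j₁ < ⋯ < j_s ≤ N} ( ∏_{i=0}^{s−1} c_{j_{i+1}} · sin( x_{j_i} + x_{j_i + 1} + ⋯ + x_{j_{i+1} − 1} ) ) · sin( x_{j_s} + x_{j_s + 1} + ⋯ + x_N ), where the inner sum is over all strictly increasing integer tuples (j₀, j₁, …, j_s) with j₀ = 2 and j_s ≤ N, the empty product (s = 0) equals 1, and the s = 0 term is (−1)^N sin( x₂ + ⋯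 + x_N ). -/
open Real Finset

/-- The pair `(Δ_N, M_N)` defined by `Δ₂ = sin x₂`, `M₂ = −cos x₂` and the recursion
`Δ_N = (−cos x_N + c_N sin x_N) Δ_{N−1} + (sin x_N) M_{N−1}`,
`M_N = (−sin x_N − c_N cos x_N) Δ_{N−1} − (cos x_N) M_{N−1}`. -/
noncomputable def DeltaM (x c : ℕ → ℝ) : ℕ → ℝ × ℝ
  | 0 => (0, 0)
  | 1 => (0, 0)
  | 2 => (Real.sin (x 2), -Real.cos (x 2))
  | (n + 3) =>
      let pr := DeltaM x c (n + 2)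
      ((-Real.cos (x (n + 3)) + c (n + 3) * Real.sin (x (n + 3))) * pr.1
          + Real.sin (x (n + 3)) * pr.2,
       (-Real.sin (x (n + 3)) - c (n + 3) * Real.cos (x (n + 3))) * pr.1
          - Real.cos (x (n + 3)) * pr.2)

open scoped Classical in
/-- Strictly increasing tuples `2 = j₀ < j₁ < ⋯ < j_s ≤ N`. -/
noncomputable def incrTuples (s N : ℕ) : Finset (Fin (s + 1) → Fin (N + 1)) :=
  Finset.univ.filter (fun j => StrictMono j ∧ (j 0 : ℕ) = 2)

/- ### auxiliary definitions -/

noncomputable def termF (x c : ℕ → ℝ) (f : ℝ → ℝ) (N s : ℕ) (j : Fin (s + 1) → Fin (N + 1)) : ℝ :=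
  (∏ i : Fin s, c (j i.succ) *
      Real.sin (∑ m ∈ Finset.Icc (j i.castSucc : ℕ) ((j i.succ : ℕ) - 1), x m))
    * f (∑ m ∈ Finset.Icc (j (Fin.last s) : ℕ) N, x m)

noncomputable def FF (x c : ℕ → ℝ) (f : ℝ → ℝ) (N : ℕ) : ℝ :=
  ∑ s ∈ Finset.range (N - 1), (-1 : ℝ)^(N + s) * ∑ j ∈ incrTuples s N, termF x c f N s j

lemma mem_incrTuples {s N : ℕ} {j : Fin (s + 1) → Fin (N + 1)} :
    j ∈ incrTuples s N ↔ StrictMono j ∧ (j 0 : ℕ) = 2 := by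
  simp [incrTuples]

lemma lb_of_mem {s N : ℕ} {j : Fin (s + 1) → Fin (N + 1)} (h : j ∈ incrTuples s N)
    (i : Fin (s + 1)) : (i : ℕ) + 2 ≤ (j i : ℕ) := by
  obtain ⟨hm, h0⟩ := mem_incrTuples.1 h
  have H : ∀ k, (hk : k < s + 1) → k + 2 ≤ (j ⟨k, hk⟩ : ℕ) := by
    intro k
    induction k with
    | zero =>
        intro hk
        have : (⟨0, hk⟩ : Fin (s + 1)) = 0 := rfl
        rw [this, h0]
    | succ k ih =>
        intro hk
        have hk' : k < s + 1 := by omega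
        have h1 := ih hk'
        have h2 := Fin.lt_def.1 (hm (show (⟨k, hk'⟩ : Fin (s + 1)) < ⟨k + 1, hk⟩ by
          simp [Fin.lt_def]))
        omega
  have := H i.1 i.isLt
  simpa using this

def liftT {s N : ℕ} (j : Fin (s + 1) → Fin (N + 1)) : Fin (s + 1) → Fin (N + 2) :=
  fun i => (j i).castSucc

def snocT {s N : ℕ} (j : Fin (s + 1) → Fin (N + 1)) : Fin (s + 2) → Fin (N + 2) :=
  Fin.snoc (fun i => (j i).castSucc) (Fin.last (N + 1))

def dropT {s N : ℕ} (j : Fin (s + 2) → Fin (N + 2)) : Fin (s + 1) → Fin (N + 1) :=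
  fun i => ⟨min (j i.castSucc : ℕ) N, by omega⟩

/- ### bijection lemmas -/

lemma sumA {N s : ℕ} (g : (Fin (s + 1) → Fin (N + 2)) → ℝ) :
    ∑ j ∈ (incrTuples s (N + 1)).filter (fun j => j (Fin.last s) ≠ Fin.last (N + 1)), g j
      = ∑ j ∈ incrTuples s N, g (liftT j) := by
  have hli : ∀ j ∈ (incrTuples s (N + 1)).filter
      (fun j => j (Fin.last s) ≠ Fin.last (N + 1)),
      liftT (fun i => (⟨min (j i : ℕ) N, by omega⟩ : Fin (N + 1))) = j := by
    intro j hj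
    rw [Finset.mem_filter] at hj
    obtain ⟨hmem, hne⟩ := hj
    obtain ⟨hm, h0⟩ := mem_incrTuples.1 hmem
    have hle : ∀ i, (j i : ℕ) ≤ N := by
      intro i
      have h1 := Fin.le_def.1 (hm.monotone (Fin.le_last i))
      have h2 : (j (Fin.last s) : ℕ) ≠ N + 1 := fun h => hne (Fin.ext h)
      have := (j (Fin.last s)).isLt
      omega
    funext i
    apply Fin.ext
    have := hle i
    simp only [liftT, Fin.coe_castSucc, Fin.val_mk]
    omega
  refine Finset.sum_nbij' (fun j i => (⟨min (j i : ℕ) N, by omega⟩ : Fin (N + 1))) liftT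
    ?_ ?_ ?_ ?_ ?_
  · intro j hj
    rw [Finset.mem_filter] at hj
    obtain ⟨hmem, hne⟩ := hj
    obtain ⟨hm, h0⟩ := mem_incrTuples.1 hmem
    have hle : ∀ i, (j i : ℕ) ≤ N := by
      intro i
      have h1 : j i ≤ j (Fin.last s) := hm.monotone (Fin.le_last i)
      have h2 : (j (Fin.last s) : ℕ) ≠ N + 1 := fun h => hne (Fin.ext h)
      have := j (Fin.last s) |>.isLt
      have := Fin.le_def.1 h1
      omega
    refine mem_incrTuples.2 ⟨?_, ?_⟩
    · intro a b hab
      have h3 := Fin.lt_def.1 (hm hab)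
      have h4 := hle a; have h5 := hle b
      show ((⟨min (j a : ℕ) N, _⟩ : Fin (N + 1))) < ⟨min (j b : ℕ) N, _⟩
      simp only [Fin.lt_def, Fin.val_mk]
      omega
    · have h4 := hle 0
      show ((⟨min (j 0 : ℕ) N, _⟩ : Fin (N + 1)) : ℕ) = 2
      simp only [Fin.val_mk]
      omega
  · intro j hj
    obtain ⟨hm, h0⟩ := mem_incrTuples.1 hj
    refine Finset.mem_filter.2 ⟨mem_incrTuples.2 ⟨?_, ?_⟩, ?_⟩
    · intro a b hab
      exact Fin.castSucc_lt_castSucc_iff.2 (hm hab)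
    · simp only [liftT, Fin.coe_castSucc]
      exact h0
    · intro h
      have := congrArg Fin.val h
      simp only [liftT, Fin.coe_castSucc, Fin.val_last] at this
      have := (j (Fin.last s)).isLt
      omega
  · exact hli
  · intro j hj
    funext i
    apply Fin.ext
    have := (j i).isLt
    simp only [liftT, Fin.coe_castSucc, Fin.val_mk]
    omega
  · intro j hj
    rw [hli j hj]

lemma sumB {N s : ℕ} (hN : 2 ≤ N) (g : (Fin (s + 2) → Fin (N + 2)) → ℝ) :
    ∑ j ∈ (incrTuples (s + 1) (N + 1)).filter
        (fun j => j (Fin.last (s + 1)) = Fin.last (N + 1)), g j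
      = ∑ j ∈ incrTuples s N, g (snocT j) := by
  have hli : ∀ j ∈ (incrTuples (s + 1) (N + 1)).filter
      (fun j => j (Fin.last (s + 1)) = Fin.last (N + 1)), snocT (dropT j) = j := by
    intro j hj
    rw [Finset.mem_filter] at hj
    obtain ⟨hmem, hlast⟩ := hj
    obtain ⟨hm, h0⟩ := mem_incrTuples.1 hmem
    have hle : ∀ i : Fin (s + 1), (j i.castSucc : ℕ) ≤ N := by
      intro i
      have h1 := Fin.lt_def.1 (hm (Fin.castSucc_lt_last i))
      rw [hlast] at h1
      simp only [Fin.val_last] at h1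
      omega
    funext i
    refine Fin.lastCases ?_ ?_ i
    · simp only [snocT, Fin.snoc_last]
      exact hlast.symm
    · intro i
      apply Fin.ext
      have := hle i
      simp only [snocT, dropT, Fin.snoc_castSucc, Fin.coe_castSucc, Fin.val_mk]
      omega
  refine Finset.sum_nbij' dropT snocT ?_ ?_ ?_ ?_ ?_
  · intro j hj
    rw [Finset.mem_filter] at hj
    obtain ⟨hmem, hlast⟩ := hj
    obtain ⟨hm, h0⟩ := mem_incrTuples.1 hmem
    have hle : ∀ i : Fin (s + 1), (j i.castSucc : ℕ) ≤ N := by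
      intro i
      have h1 : j i.castSucc < j (Fin.last (s + 1)) := hm (Fin.castSucc_lt_last i)
      have := Fin.lt_def.1 h1
      rw [hlast] at this
      simp only [Fin.val_last] at this
      omega
    refine mem_incrTuples.2 ⟨?_, ?_⟩
    · intro a b hab
      have : j a.castSucc < j b.castSucc := hm (Fin.castSucc_lt_castSucc_iff.2 hab)
      have := Fin.lt_def.1 this
      simp only [Fin.lt_def, dropT, Fin.val_mk]
      have := hle a; have := hle b
      omega
    · have h00 : ((0 : Fin (s + 2))) = Fin.castSucc 0 := rfl
      have := hle 0
      simp only [dropT, Fin.val_mk]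
      rw [← h00, h0]
      omega
  · intro j hj
    obtain ⟨hm, h0⟩ := mem_incrTuples.1 hj
    refine Finset.mem_filter.2 ⟨mem_incrTuples.2 ⟨?_, ?_⟩, ?_⟩
    · rw [Fin.strictMono_iff_lt_succ]
      intro i
      refine Fin.lastCases ?_ ?_ i
      · have : (Fin.last s).succ = Fin.last (s + 1) := rfl
        rw [this]
        simp only [snocT, Fin.snoc_castSucc, Fin.snoc_last]
        exact Fin.castSucc_lt_last _
      · intro i
        have h1 : (Fin.castSucc i).succ = Fin.castSucc i.succ := by
          rw [Fin.succ_castSucc]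
        rw [h1]
        simp only [snocT, Fin.snoc_castSucc]
        exact Fin.castSucc_lt_castSucc_iff.2 (hm (Fin.castSucc_lt_succ (i := i)))
    · have h00 : ((0 : Fin (s + 2))) = Fin.castSucc 0 := rfl
      rw [h00]
      simp only [snocT, Fin.snoc_castSucc, Fin.coe_castSucc]
      exact h0
    · simp [snocT]
  · exact hli
  · intro j hj
    funext i
    apply Fin.ext
    have := (j i).isLt
    simp only [dropT, snocT, Fin.snoc_castSucc, Fin.coe_castSucc, Fin.val_mk]
    omega
  · intro j hj
    rw [hli j hj]

/- ### empty / singleton lemmas -/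

lemma incrTuples_zero (N : ℕ) (hN : 2 ≤ N) :
    incrTuples 0 N = {fun _ => (⟨2, by omega⟩ : Fin (N + 1))} := by
  ext j
  simp only [mem_incrTuples, Finset.mem_singleton]
  constructor
  · rintro ⟨-, h0⟩
    funext i
    have hi : i = 0 := Fin.fin_one_eq_zero i
    subst hi
    exact Fin.ext h0
  · rintro rfl
    refine ⟨fun a b hab => ?_, rfl⟩
    have h1 := Fin.lt_def.1 hab
    have := a.isLt
    have := b.isLt
    omega

lemma top_filter_empty {N : ℕ} (hN : 2 ≤ N) :
    (incrTuples (N - 1) (N + 1)).filter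
        (fun j => j (Fin.last (N - 1)) ≠ Fin.last (N + 1)) = ∅ := by
  rw [Finset.filter_eq_empty_iff]
  intro j hj hne
  have := lb_of_mem hj (Fin.last (N - 1))
  simp only [Fin.val_last] at this
  have h2 : (j (Fin.last (N - 1)) : ℕ) ≠ N + 1 := fun h => hne (Fin.ext h)
  have := (j (Fin.last (N - 1))).isLt
  omega

lemma zero_filter_empty {N : ℕ} (hN : 2 ≤ N) :
    (incrTuples 0 (N + 1)).filter
        (fun j => j (Fin.last 0) = Fin.last (N + 1)) = ∅ := by
  rw [Finset.filter_eq_empty_iff]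
  intro j hj heq
  obtain ⟨-, h0⟩ := mem_incrTuples.1 hj
  have h0' : (j (Fin.last 0) : ℕ) = 2 := h0
  rw [heq] at h0'
  simp only [Fin.val_last] at h0'
  omega

/- ### term computations -/

lemma termF_liftT (x c : ℕ → ℝ) (f : ℝ → ℝ) {N s : ℕ} (j : Fin (s + 1) → Fin (N + 1)) :
    termF x c f (N + 1) s (liftT j)
      = (∏ i : Fin s, c (j i.succ) *
          Real.sin (∑ m ∈ Finset.Icc (j i.castSucc : ℕ) ((j i.succ : ℕ) - 1), x m))
        * f ((∑ m ∈ Finset.Icc (j (Fin.last s) : ℕ) N, x m) + x (N + 1)) := by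
  have htail : ∑ m ∈ Finset.Icc ((liftT j (Fin.last s) : ℕ)) (N + 1), x m
      = (∑ m ∈ Finset.Icc (j (Fin.last s) : ℕ) N, x m) + x (N + 1) := by
    have hle : (j (Fin.last s) : ℕ) ≤ N + 1 := by
      have := (j (Fin.last s)).isLt; omega
    simp only [liftT, Fin.coe_castSucc]
    exact Finset.sum_Icc_succ_top hle x
  simp only [termF, liftT, Fin.coe_castSucc] at *
  rw [htail]

lemma termF_snocT (x c : ℕ → ℝ) (f : ℝ → ℝ) {N s : ℕ} (j : Fin (s + 1) → Fin (N + 1)) :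
    termF x c f (N + 1) (s + 1) (snocT j)
      = ((∏ i : Fin s, c (j i.succ) *
          Real.sin (∑ m ∈ Finset.Icc (j i.castSucc : ℕ) ((j i.succ : ℕ) - 1), x m))
        * (c (N + 1) * Real.sin (∑ m ∈ Finset.Icc (j (Fin.last s) : ℕ) N, x m)))
        * f (x (N + 1)) := by
  have hlast : snocT j (Fin.last (s + 1)) = Fin.last (N + 1) := by simp [snocT]
  have htail : (∑ m ∈ Finset.Icc ((snocT j (Fin.last (s + 1)) : ℕ)) (N + 1), x m) = x (N + 1) := by
    rw [hlast]
    simp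
  rw [termF, htail]
  congr 1
  rw [Fin.prod_univ_castSucc]
  congr 1
  · apply Finset.prod_congr rfl
    intro i _
    have h1 : (Fin.castSucc i).succ = Fin.castSucc i.succ := by rw [Fin.succ_castSucc]
    have h2 : Fin.castSucc (Fin.castSucc i) = Fin.castSucc (i.castSucc) := rfl
    rw [h1]
    simp only [snocT, Fin.snoc_castSucc, Fin.coe_castSucc]
  · have h1 : (Fin.last s).succ = Fin.last (s + 1) := rfl
    rw [h1, hlast]
    have h2 : Fin.castSucc (Fin.last s) = Fin.castSucc (Fin.last s) := rfl
    simp [snocT, Fin.snoc_last]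

/- ### the recursion for FF -/

lemma FF_succ (x c : ℕ → ℝ) (f : ℝ → ℝ) (n : ℕ) :
    FF x c f (n + 3)
      = ∑ s ∈ Finset.range (n + 1),
          ((-1 : ℝ)^(n + 3 + s) * ∑ j ∈ incrTuples s (n + 2), termF x c f (n + 3) s (liftT j)
          + (-1 : ℝ)^(n + 3 + (s + 1)) *
              ∑ j ∈ incrTuples s (n + 2), termF x c f (n + 3) (s + 1) (snocT j)) := by
  have hN : 2 ≤ n + 2 := by omega
  have h1 : FF x c f (n + 3) = ∑ s' ∈ Finset.range (n + 2),
      ((-1 : ℝ)^(n + 3 + s') * ∑ j ∈ (incrTuples s' (n + 3)).filter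
          (fun j => j (Fin.last s') = Fin.last (n + 3)), termF x c f (n + 3) s' j
      + (-1 : ℝ)^(n + 3 + s') * ∑ j ∈ (incrTuples s' (n + 3)).filter
          (fun j => j (Fin.last s') ≠ Fin.last (n + 3)), termF x c f (n + 3) s' j) := by
    rw [FF]
    refine Finset.sum_congr rfl ?_
    intro s' _
    rw [← mul_add]
    congr 1
    rw [Finset.sum_filter_add_sum_filter_not (incrTuples s' (n + 3))
        (fun j => j (Fin.last s') = Fin.last (n + 3)) (termF x c f (n + 3) s')]
  rw [h1, Finset.sum_add_distrib]
  have hB : (∑ s' ∈ Finset.range (n + 2),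
      (-1 : ℝ)^(n + 3 + s') * ∑ j ∈ (incrTuples s' (n + 3)).filter
          (fun j => j (Fin.last s') = Fin.last (n + 3)), termF x c f (n + 3) s' j)
      = ∑ s ∈ Finset.range (n + 1), (-1 : ℝ)^(n + 3 + (s + 1)) *
          ∑ j ∈ incrTuples s (n + 2), termF x c f (n + 3) (s + 1) (snocT j) := by
    have h2 : (∑ s' ∈ Finset.range (n + 2),
        (-1 : ℝ)^(n + 3 + s') * ∑ j ∈ (incrTuples s' (n + 3)).filter
            (fun j => j (Fin.last s') = Fin.last (n + 3)), termF x c f (n + 3) s' j)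
        = (∑ s ∈ Finset.range (n + 1),
            (-1 : ℝ)^(n + 3 + (s + 1)) * ∑ j ∈ (incrTuples (s + 1) (n + 3)).filter
              (fun j => j (Fin.last (s + 1)) = Fin.last (n + 3)), termF x c f (n + 3) (s + 1) j)
          + (-1 : ℝ)^(n + 3 + 0) * ∑ j ∈ (incrTuples 0 (n + 3)).filter
              (fun j => j (Fin.last 0) = Fin.last (n + 3)), termF x c f (n + 3) 0 j :=
      Finset.sum_range_succ' _ (n + 1)
    rw [h2]
    have h0 : (incrTuples 0 (n + 3)).filter
        (fun j => j (Fin.last 0) = Fin.last (n + 3)) = ∅ := zero_filter_empty (N := n + 2) hN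
    rw [h0]
    simp only [Finset.sum_empty, mul_zero, add_zero]
    refine Finset.sum_congr rfl ?_
    intro s _
    congr 1
    exact sumB (N := n + 2) hN (termF x c f (n + 3) (s + 1))
  have hA : (∑ s' ∈ Finset.range (n + 2),
      (-1 : ℝ)^(n + 3 + s') * ∑ j ∈ (incrTuples s' (n + 3)).filter
          (fun j => j (Fin.last s') ≠ Fin.last (n + 3)), termF x c f (n + 3) s' j)
      = ∑ s ∈ Finset.range (n + 1), (-1 : ℝ)^(n + 3 + s) *
          ∑ j ∈ incrTuples s (n + 2), termF x c f (n + 3) s (liftT j) := by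
    have h2 : (∑ s' ∈ Finset.range (n + 2),
        (-1 : ℝ)^(n + 3 + s') * ∑ j ∈ (incrTuples s' (n + 3)).filter
            (fun j => j (Fin.last s') ≠ Fin.last (n + 3)), termF x c f (n + 3) s' j)
        = (∑ s ∈ Finset.range (n + 1),
            (-1 : ℝ)^(n + 3 + s) * ∑ j ∈ (incrTuples s (n + 3)).filter
              (fun j => j (Fin.last s) ≠ Fin.last (n + 3)), termF x c f (n + 3) s j)
          + (-1 : ℝ)^(n + 3 + (n + 1)) * ∑ j ∈ (incrTuples (n + 1) (n + 3)).filter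
              (fun j => j (Fin.last (n + 1)) ≠ Fin.last (n + 3)), termF x c f (n + 3) (n + 1) j :=
      Finset.sum_range_succ _ (n + 1)
    rw [h2]
    have h0 : (incrTuples (n + 1) (n + 3)).filter
        (fun j => j (Fin.last (n + 1)) ≠ Fin.last (n + 3)) = ∅ :=
      top_filter_empty (N := n + 2) hN
    rw [h0]
    simp only [Finset.sum_empty, mul_zero, add_zero]
    refine Finset.sum_congr rfl ?_
    intro s _
    congr 1
    exact sumA (N := n + 2) (termF x c f (n + 3) s)
  rw [hA, hB, ← Finset.sum_add_distrib]
  refine Finset.sum_congr rfl ?_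
  intro s _
  ring

/- ### base case -/

lemma FF_two (x c : ℕ → ℝ) (f : ℝ → ℝ) : FF x c f 2 = f (x 2) := by
  rw [FF]
  have : (2 : ℕ) - 1 = 1 := rfl
  rw [this, Finset.sum_range_one, incrTuples_zero 2 le_rfl, Finset.sum_singleton, termF]
  norm_num

/- ### main induction -/

theorem key (x c : ℕ → ℝ) : ∀ n : ℕ,
    (DeltaM x c (n + 2)).1 = FF x c Real.sin (n + 2) ∧
    (DeltaM x c (n + 2)).2 = -FF x c Real.cos (n + 2) := by
  intro n
  induction n with
  | zero =>
      constructor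
      · rw [FF_two]; rfl
      · rw [FF_two]; rfl
  | succ n ih =>
      have hD : DeltaM x c (n + 1 + 2) = DeltaM x c (n + 3) := rfl
      rw [hD]
      have hΔ : (DeltaM x c (n + 3)).1
          = (-Real.cos (x (n + 3)) + c (n + 3) * Real.sin (x (n + 3))) * (DeltaM x c (n + 2)).1
            + Real.sin (x (n + 3)) * (DeltaM x c (n + 2)).2 := by
        simp only [DeltaM]
      have hM : (DeltaM x c (n + 3)).2
          = (-Real.sin (x (n + 3)) - c (n + 3) * Real.cos (x (n + 3))) * (DeltaM x c (n + 2)).1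
            - Real.cos (x (n + 3)) * (DeltaM x c (n + 2)).2 := by
        simp only [DeltaM]
      have hFF3 : (n + 1 + 2) = n + 3 := rfl
      rw [hFF3]
      have key_s : ∀ g : ℝ → ℝ, ∀ s ∈ Finset.range (n + 1),
          ((-1 : ℝ)^(n + 3 + s) * ∑ j ∈ incrTuples s (n + 2), termF x c g (n + 3) s (liftT j)
          + (-1 : ℝ)^(n + 3 + (s + 1)) *
              ∑ j ∈ incrTuples s (n + 2), termF x c g (n + 3) (s + 1) (snocT j))
          = ∑ j ∈ incrTuples s (n + 2),
              ((-1 : ℝ)^(n + 3 + s) *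
                ((∏ i : Fin s, c (j i.succ) *
                  Real.sin (∑ m ∈ Finset.Icc (j i.castSucc : ℕ) ((j i.succ : ℕ) - 1), x m))
                  * g ((∑ m ∈ Finset.Icc (j (Fin.last s) : ℕ) (n + 2), x m) + x (n + 3)))
              + (-1 : ℝ)^(n + 3 + (s + 1)) *
                (((∏ i : Fin s, c (j i.succ) *
                  Real.sin (∑ m ∈ Finset.Icc (j i.castSucc : ℕ) ((j i.succ : ℕ) - 1), x m))
                  * (c (n + 3) *
                      Real.sin (∑ m ∈ Finset.Icc (j (Fin.last s) : ℕ) (n + 2), x m)))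
                  * g (x (n + 3)))) := by
        intro g s _
        rw [Finset.mul_sum, Finset.mul_sum, ← Finset.sum_add_distrib]
        refine Finset.sum_congr rfl ?_
        intro j _
        rw [termF_liftT, termF_snocT]
      constructor
      · rw [hΔ, ih.1, ih.2, FF_succ x c Real.sin n]
        rw [Finset.sum_congr rfl (key_s Real.sin)]
        rw [FF, FF]
        have hsub2 : (n + 2) - 1 = n + 1 := rfl
        rw [hsub2]
        simp only [Finset.mul_sum, ← Finset.sum_neg_distrib, mul_neg, neg_mul,
          ← Finset.sum_add_distrib, ← Finset.sum_sub_distrib]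
        symm
        refine Finset.sum_congr rfl ?_
        intro s _
        refine Finset.sum_congr rfl ?_
        intro j _
        rw [termF, termF, Real.sin_add]
        ring
      · rw [hM, ih.1, ih.2, FF_succ x c Real.cos n]
        rw [Finset.sum_congr rfl (key_s Real.cos)]
        rw [FF, FF]
        have hsub2 : (n + 2) - 1 = n + 1 := rfl
        rw [hsub2]
        simp only [Finset.mul_sum, ← Finset.sum_neg_distrib, mul_neg, neg_mul,
          ← Finset.sum_add_distrib, ← Finset.sum_sub_distrib]
        symm
        refine Finset.sum_congr rfl ?_
        intro s _
        refine Finset.sum_congr rfl ?_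
        intro j _
        rw [termF, termF, Real.cos_add]
        ring

/-- the closed-form expansion of `Δ_N` as a signed sum over strictly
increasing tuples `2 = j₀ < j₁ < ⋯ < j_s ≤ N`. -/
theorem stmt_9 (x c : ℕ → ℝ) :
    ∀ N : ℕ, 2 ≤ N →
      (DeltaM x c N).1 =
        ∑ s ∈ Finset.range (N - 1), (-1 : ℝ)^(N + s) *
          ∑ j ∈ incrTuples s N,
            (∏ i : Fin s, c (j i.succ) *
                Real.sin (∑ m ∈ Finset.Icc (j i.castSucc : ℕ) ((j i.succ : ℕ) - 1), x m))
              * Real.sin (∑ m ∈ Finset.Icc (j (Fin.last s) : ℕ) N, x m) := by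
  intro N hN
  obtain ⟨n, rfl⟩ := Nat.exists_eq_add_of_le hN
  have h : 2 + n = n + 2 := by omega
  rw [h]
  have := (key x c n).1
  rw [FF] at this
  exact this
end

section
/- Let x : ℕ → ℝ and c : ℕ → ℝ, and define sequences Δ, M by Δ₂ := sin x₂, M₂ := −cos x₂, and for N ≥ 3: Δ_N := (−cos x_N + c_N sin x_N) Δ_{N−1} + (sin x_N) M_{N−1} and M_N := (−sin x_N − c_N cos x_N) Δ_{N−1} − (cos x_N) M_{N−1}. Then for every N ≥ 2, M_N = Σ_{s=0}^{N−2} (−1)^{N+s+1} Σ_{2 = j₀ < j₁ < ⋯ < j_s ≤ N} ( ∏_{i=0}^{s−1} c_{j_{i+1}} · sin( x_{j_i} + x_{j_i + 1} + ⋯ + x_{j_{i+1} − 1} ) ) · cos( x_{j_s} + x_{j_s + 1} + ⋯ + x_N ), where the inner sum is over all strictly increasing integer tuples (j₀, j₁, …, j_s) with j₀ = 2 and j_s ≤ N, the empty product (s = 0) equals 1, and the s = 0 term is (−1)^{N+1} cos( x₂ + ⋯ + x_N ). -/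
open Real Finset

namespace Stmt10

lemma mem_incrTuples {s N : ℕ} {j : Fin (s + 1) → Fin (N + 1)} :
    j ∈ incrTuples s N ↔ StrictMono j ∧ (j 0 : ℕ) = 2 := by
  classical
  simp [incrTuples]

lemma lb {s N : ℕ} {j : Fin (s + 1) → Fin (N + 1)} (hm : StrictMono j)
    (h0 : (j 0 : ℕ) = 2) : ∀ i : Fin (s + 1), (i : ℕ) + 2 ≤ (j i : ℕ) := by
  intro i
  induction i using Fin.induction with
  | zero => simp [h0]
  | succ i ih =>
    have h2 : (j i.castSucc : ℕ) < (j i.succ : ℕ) := hm (Fin.castSucc_lt_succ (i := i))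
    simp only [Fin.coe_castSucc, Fin.val_succ] at *
    omega

lemma incrTuples_eq_empty {s N : ℕ} (h : N < s + 2) : incrTuples s N = ∅ := by
  ext j
  simp only [mem_incrTuples, Finset.notMem_empty, iff_false, not_and]
  intro hm h0
  have h1 := lb hm h0 (Fin.last s)
  have h2 := (j (Fin.last s)).isLt
  simp only [Fin.val_last] at h1
  omega

lemma incrTuples_zero (N : ℕ) (h : 2 ≤ N) :
    incrTuples 0 N = {fun _ => (⟨2, by omega⟩ : Fin (N + 1))} := by
  ext j
  simp only [mem_incrTuples, Finset.mem_singleton]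
  constructor
  · rintro ⟨-, h0⟩
    funext i
    have : i = 0 := Fin.ext (by omega)
    subst this
    exact Fin.ext h0
  · rintro rfl
    refine ⟨fun a b hab => ?_, rfl⟩
    have : a = b := Fin.ext (by omega)
    exact absurd (this ▸ hab) (lt_irrefl _)

lemma split0 (n : ℕ) (F : (Fin 1 → ℕ) → ℝ) :
    (∑ j ∈ incrTuples 0 (n + 3), F (fun i => (j i : ℕ)))
      = ∑ j ∈ incrTuples 0 (n + 2), F (fun i => (j i : ℕ)) := by
  rw [incrTuples_zero (n + 3) (by omega), incrTuples_zero (n + 2) (by omega),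
    Finset.sum_singleton, Finset.sum_singleton]

lemma split (s n : ℕ) (F : (Fin (s + 2) → ℕ) → ℝ) :
    (∑ j ∈ incrTuples (s + 1) (n + 3), F (fun i => (j i : ℕ)))
      = (∑ j ∈ incrTuples (s + 1) (n + 2), F (fun i => (j i : ℕ)))
      + ∑ j ∈ incrTuples s (n + 2), F (Fin.snoc (fun i => (j i : ℕ)) (n + 3)) := by
  classical
  rw [← Finset.sum_filter_add_sum_filter_not (incrTuples (s + 1) (n + 3))
    (fun j => (j (Fin.last (s + 1)) : ℕ) < n + 3)]
  congr 1
  · -- tuples with last entry ≤ n+2  ↔  incrTuples (s+1) (n+2)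
    refine Finset.sum_nbij' (i := fun j => fun i => (⟨min (j i : ℕ) (n + 2), by omega⟩ : Fin (n + 3)))
      (j := fun j => fun i => (j i).castSucc) ?_ ?_ ?_ ?_ ?_
    · intro j hj
      simp only [Finset.mem_filter, mem_incrTuples] at hj
      obtain ⟨⟨hm, h0⟩, hlt⟩ := hj
      have hle : ∀ i, (j i : ℕ) ≤ n + 2 := by
        intro i
        have := hm.monotone (Fin.le_last i)
        have h2 : (j i : ℕ) ≤ (j (Fin.last (s + 1)) : ℕ) := this
        omega
      refine mem_incrTuples.2 ⟨fun a b hab => ?_, ?_⟩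
      · have hab' : (j a : ℕ) < (j b : ℕ) := hm hab
        simp only [Fin.mk_lt_mk]
        have ha := hle a
        have hb := hle b
        omega
      · simp only []
        have h00 := hle 0
        omega
    · intro j hj
      simp only [mem_incrTuples] at hj
      obtain ⟨hm, h0⟩ := hj
      simp only [Finset.mem_filter, mem_incrTuples]
      refine ⟨⟨fun a b hab => ?_, by simp [h0]⟩, ?_⟩
      · simpa using hm hab
      · have := (j (Fin.last (s + 1))).isLt
        simp only [Fin.coe_castSucc]
        omega
    · intro j hj
      simp only [Finset.mem_filter, mem_incrTuples] at hj
      obtain ⟨⟨hm, h0⟩, hlt⟩ := hj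
      funext i
      have hle : (j i : ℕ) ≤ n + 2 := by
        have h2 : (j i : ℕ) ≤ (j (Fin.last (s + 1)) : ℕ) := hm.monotone (Fin.le_last i)
        omega
      apply Fin.ext
      simp [hle]
    · intro j hj
      funext i
      have := (j i).isLt
      apply Fin.ext
      simp
      omega
    · intro j hj
      simp only [Finset.mem_filter, mem_incrTuples] at hj
      obtain ⟨⟨hm, h0⟩, hlt⟩ := hj
      congr 1
      funext i
      have hle : (j i : ℕ) ≤ n + 2 := by
        have h2 : (j i : ℕ) ≤ (j (Fin.last (s + 1)) : ℕ) := hm.monotone (Fin.le_last i)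
        omega
      simp [hle]
  · -- tuples with last entry = n+3  ↔  incrTuples s (n+2) via snoc
    refine Finset.sum_nbij'
      (i := fun j => fun i => (⟨min (j i.castSucc : ℕ) (n + 2), by omega⟩ : Fin (n + 3)))
      (j := fun j => Fin.snoc (fun i => (j i).castSucc) (Fin.last (n + 3))) ?_ ?_ ?_ ?_ ?_
    · intro j hj
      simp only [Finset.mem_filter, mem_incrTuples, not_lt] at hj
      obtain ⟨⟨hm, h0⟩, hge⟩ := hj
      have hlast : (j (Fin.last (s + 1)) : ℕ) = n + 3 := by
        have := (j (Fin.last (s + 1))).isLt; omega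
      have hle : ∀ i : Fin (s + 1), (j i.castSucc : ℕ) ≤ n + 2 := by
        intro i
        have h2 : (j i.castSucc : ℕ) < (j (Fin.last (s + 1)) : ℕ) :=
          hm (Fin.castSucc_lt_last i)
        omega
      refine mem_incrTuples.2 ⟨fun a b hab => ?_, ?_⟩
      · have hab' : (j a.castSucc : ℕ) < (j b.castSucc : ℕ) :=
          hm (Fin.castSucc_lt_castSucc_iff.2 hab)
        simp only [Fin.mk_lt_mk]
        have ha := hle a
        have hb := hle b
        omega
      · simp only []
        have h00 := hle 0
        simp only [Fin.castSucc_zero] at h00 h0 ⊢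
        omega
    · intro j hj
      simp only [mem_incrTuples] at hj
      obtain ⟨hm, h0⟩ := hj
      simp only [Finset.mem_filter, mem_incrTuples, not_lt]
      refine ⟨⟨fun a b hab => ?_, ?_⟩, ?_⟩
      · rcases Fin.eq_castSucc_or_eq_last b with ⟨b', rfl⟩ | rfl
        · obtain ⟨a', rfl⟩ := Fin.exists_castSucc_eq.2
            (Fin.ne_last_of_lt hab)
          rw [Fin.snoc_castSucc, Fin.snoc_castSucc]
          exact Fin.castSucc_lt_castSucc_iff.2 (hm (by
            exact Fin.castSucc_lt_castSucc_iff.1 hab))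
        · obtain ⟨a', rfl⟩ := Fin.exists_castSucc_eq.2
            (Fin.ne_last_of_lt hab)
          rw [Fin.snoc_castSucc, Fin.snoc_last]
          exact Fin.castSucc_lt_last _
      · have : (0 : Fin (s + 2)) = Fin.castSucc 0 := rfl
        rw [this, Fin.snoc_castSucc]
        simpa using h0
      · rw [Fin.snoc_last]
        simp
    · intro j hj
      simp only [Finset.mem_filter, mem_incrTuples, not_lt] at hj
      obtain ⟨⟨hm, h0⟩, hge⟩ := hj
      have hlast : (j (Fin.last (s + 1)) : ℕ) = n + 3 := by
        have := (j (Fin.last (s + 1))).isLt; omega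
      have hle : ∀ i : Fin (s + 1), (j i.castSucc : ℕ) ≤ n + 2 := by
        intro i
        have h2 : (j i.castSucc : ℕ) < (j (Fin.last (s + 1)) : ℕ) :=
          hm (Fin.castSucc_lt_last i)
        omega
      funext i
      rcases Fin.eq_castSucc_or_eq_last i with ⟨i', rfl⟩ | rfl
      · apply Fin.ext
        have := hle i'
        simp only [Fin.snoc_castSucc]
        simp [this]
      · apply Fin.ext
        simp only [Fin.snoc_last]
        simp [hlast]
    · intro j hj
      funext i
      rcases Fin.eq_castSucc_or_eq_last i with ⟨i', rfl⟩ | rfl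
      · have hi := (j i'.castSucc).isLt
        apply Fin.ext
        simp only [Fin.snoc_castSucc]
        simp
        omega
      · have hi := (j (Fin.last s)).isLt
        apply Fin.ext
        simp only [Fin.snoc_last]
        simp
        omega
    · intro j hj
      simp only [Finset.mem_filter, mem_incrTuples, not_lt] at hj
      obtain ⟨⟨hm, h0⟩, hge⟩ := hj
      have hlast : (j (Fin.last (s + 1)) : ℕ) = n + 3 := by
        have := (j (Fin.last (s + 1))).isLt; omega
      have hle : ∀ i : Fin (s + 1), (j i.castSucc : ℕ) ≤ n + 2 := by
        intro i
        have h2 : (j i.castSucc : ℕ) < (j (Fin.last (s + 1)) : ℕ) :=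
          hm (Fin.castSucc_lt_last i)
        omega
      congr 1
      funext i
      rcases Fin.eq_castSucc_or_eq_last i with ⟨i', rfl⟩ | rfl
      · have := hle i'
        simp only [Fin.snoc_castSucc]
        simp [this]
      · simp only [Fin.snoc_last]
        simp [hlast]

noncomputable def fac (x c : ℕ → ℝ) (s : ℕ) (j : Fin (s + 1) → ℕ) : ℝ :=
  ∏ i : Fin s, c (j i.succ) *
    Real.sin (∑ m ∈ Finset.Icc (j i.castSucc) (j i.succ - 1), x m)

lemma fac_snoc (x c : ℕ → ℝ) (s : ℕ) (v : Fin (s + 1) → ℕ) (a : ℕ) :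
    fac x c (s + 1) (Fin.snoc v a)
      = fac x c s v *
        (c a * Real.sin (∑ m ∈ Finset.Icc (v (Fin.last s)) (a - 1), x m)) := by
  unfold fac
  rw [Fin.prod_univ_castSucc]
  congr 1
  · refine Finset.prod_congr rfl fun i _ => ?_
    rw [Fin.succ_castSucc, Fin.snoc_castSucc, Fin.snoc_castSucc]
  · rw [Fin.succ_last, Fin.snoc_last, Fin.snoc_castSucc]

lemma cos_step (x : ℕ → ℝ) (n a : ℕ) (h : a ≤ n + 2) :
    Real.cos (∑ m ∈ Finset.Icc a (n + 3), x m)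
      = Real.cos (x (n + 3)) * Real.cos (∑ m ∈ Finset.Icc a (n + 2), x m)
        - Real.sin (x (n + 3)) * Real.sin (∑ m ∈ Finset.Icc a (n + 2), x m) := by
  rw [show n + 3 = (n + 2) + 1 from rfl, Finset.sum_Icc_succ_top (by omega), Real.cos_add]
  ring

lemma sin_step (x : ℕ → ℝ) (n a : ℕ) (h : a ≤ n + 2) :
    Real.sin (∑ m ∈ Finset.Icc a (n + 3), x m)
      = Real.cos (x (n + 3)) * Real.sin (∑ m ∈ Finset.Icc a (n + 2), x m)
        + Real.sin (x (n + 3)) * Real.cos (∑ m ∈ Finset.Icc a (n + 2), x m) := by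
  rw [show n + 3 = (n + 2) + 1 from rfl, Finset.sum_Icc_succ_top (by omega), Real.sin_add]
  ring

lemma combine_aux (n : ℕ) (f g : ℕ → ℝ) (hf : f (n + 1) = 0) :
    ∑ s ∈ Finset.range (n + 2), (f s + (if s = 0 then 0 else g (s - 1)))
      = ∑ s ∈ Finset.range (n + 1), f s + ∑ s ∈ Finset.range (n + 1), g s := by
  rw [Finset.sum_add_distrib]
  congr 1
  · rw [Finset.sum_range_succ, hf, add_zero]
  · rw [Finset.sum_range_succ']
    simp

lemma combineM (n : ℕ) (sN cN k : ℝ) (A B SS : ℕ → ℝ)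
    (hA : A (n + 1) = 0) (hB : B (n + 1) = 0)
    (h0 : SS 0 = cN * B 0 - sN * A 0)
    (hs : ∀ s, SS (s + 1) = (cN * B (s + 1) - sN * A (s + 1)) + k * A s) :
    (-sN - k) * (∑ s ∈ Finset.range (n + 1), (-1 : ℝ) ^ (n + s) * A s)
      - cN * (∑ s ∈ Finset.range (n + 1), (-1 : ℝ) ^ (n + s + 1) * B s)
    = ∑ s ∈ Finset.range (n + 2), (-1 : ℝ) ^ (n + 1 + s + 1) * SS s := by
  have step : ∀ s ∈ Finset.range (n + 2),
      (-1 : ℝ) ^ (n + 1 + s + 1) * SS s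
        = ((fun s => (-1 : ℝ) ^ (n + s) * (cN * B s - sN * A s)) s
            + if s = 0 then 0
              else (fun s => (-1 : ℝ) ^ (n + s + 1) * (k * A s)) (s - 1)) := by
    intro s _
    match s with
    | 0 => simp only [h0, reduceIte, add_zero, Nat.add_zero]
           rw [show n + 1 + 0 + 1 = (n + 0) + 2 by omega, pow_add]
           ring
    | (t + 1) =>
      simp only [if_neg (Nat.succ_ne_zero t), Nat.add_sub_cancel, hs t]
      rw [show n + 1 + (t + 1) + 1 = (n + (t + 1)) + 2 by omega, pow_add,
        show n + (t + 1) = (n + t) + 1 by omega, pow_succ]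
      ring
  rw [Finset.sum_congr rfl step,
    combine_aux n (fun s => (-1 : ℝ) ^ (n + s) * (cN * B s - sN * A s))
      (fun s => (-1 : ℝ) ^ (n + s + 1) * (k * A s))
      (by simp only [hA, hB]; ring)]
  rw [Finset.mul_sum, Finset.mul_sum, ← Finset.sum_sub_distrib, ← Finset.sum_add_distrib]
  refine Finset.sum_congr rfl fun s _ => ?_
  rw [pow_succ]
  ring

lemma combineD (n : ℕ) (sN cN k : ℝ) (A B SS : ℕ → ℝ)
    (hA : A (n + 1) = 0) (hB : B (n + 1) = 0)
    (h0 : SS 0 = cN * A 0 + sN * B 0)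
    (hs : ∀ s, SS (s + 1) = (cN * A (s + 1) + sN * B (s + 1)) + k * sN * A s) :
    (-cN + k * sN) * (∑ s ∈ Finset.range (n + 1), (-1 : ℝ) ^ (n + s) * A s)
      + sN * (∑ s ∈ Finset.range (n + 1), (-1 : ℝ) ^ (n + s + 1) * B s)
    = ∑ s ∈ Finset.range (n + 2), (-1 : ℝ) ^ (n + 1 + s) * SS s := by
  have step : ∀ s ∈ Finset.range (n + 2),
      (-1 : ℝ) ^ (n + 1 + s) * SS s
        = ((fun s => (-1 : ℝ) ^ (n + s + 1) * (cN * A s + sN * B s)) s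
            + if s = 0 then 0
              else (fun s => (-1 : ℝ) ^ (n + s) * (k * sN * A s)) (s - 1)) := by
    intro s _
    match s with
    | 0 => simp only [h0, reduceIte, add_zero, Nat.add_zero]
    | (t + 1) =>
      simp only [if_neg (Nat.succ_ne_zero t), Nat.add_sub_cancel, hs t]
      rw [show n + 1 + (t + 1) = (n + t) + 2 by omega, pow_add,
        show n + (t + 1) + 1 = (n + t) + 2 by omega, pow_add]
      ring
  rw [Finset.sum_congr rfl step,
    combine_aux n (fun s => (-1 : ℝ) ^ (n + s + 1) * (cN * A s + sN * B s))
      (fun s => (-1 : ℝ) ^ (n + s) * (k * sN * A s))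
      (by simp only [hA, hB]; ring)]
  rw [Finset.mul_sum, Finset.mul_sum, ← Finset.sum_add_distrib, ← Finset.sum_add_distrib]
  refine Finset.sum_congr rfl fun s _ => ?_
  rw [pow_succ]
  ring

lemma key (x c : ℕ → ℝ) : ∀ n : ℕ,
    ((DeltaM x c (n + 2)).1
        = ∑ s ∈ Finset.range (n + 1), (-1 : ℝ) ^ (n + s) *
            ∑ j ∈ incrTuples s (n + 2),
              fac x c s (fun i => (j i : ℕ)) *
                Real.sin (∑ m ∈ Finset.Icc ((j (Fin.last s)) : ℕ) (n + 2), x m))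
      ∧ (DeltaM x c (n + 2)).2
        = ∑ s ∈ Finset.range (n + 1), (-1 : ℝ) ^ (n + s + 1) *
            ∑ j ∈ incrTuples s (n + 2),
              fac x c s (fun i => (j i : ℕ)) *
                Real.cos (∑ m ∈ Finset.Icc ((j (Fin.last s)) : ℕ) (n + 2), x m) := by
  intro n
  induction n with
  | zero =>
    constructor <;>
      simp [DeltaM, incrTuples_zero 2 (by omega), fac, Finset.sum_range_one,
        Finset.Icc_self]
  | succ n ih =>
    obtain ⟨ihD, ihM⟩ := ih
    have hA : (∑ j ∈ incrTuples (n + 1) (n + 2),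
        fac x c (n + 1) (fun i => (j i : ℕ)) *
          Real.sin (∑ m ∈ Finset.Icc ((j (Fin.last (n + 1))) : ℕ) (n + 2), x m)) = 0 := by
      rw [incrTuples_eq_empty (by omega), Finset.sum_empty]
    have hB : (∑ j ∈ incrTuples (n + 1) (n + 2),
        fac x c (n + 1) (fun i => (j i : ℕ)) *
          Real.cos (∑ m ∈ Finset.Icc ((j (Fin.last (n + 1))) : ℕ) (n + 2), x m)) = 0 := by
      rw [incrTuples_eq_empty (by omega), Finset.sum_empty]
    -- cast-part reduction, cos version
    have hcastC : ∀ s : ℕ,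
        (∑ j ∈ incrTuples s (n + 2),
          fac x c s (fun i => (j i : ℕ)) *
            Real.cos (∑ m ∈ Finset.Icc ((j (Fin.last s)) : ℕ) (n + 3), x m))
        = Real.cos (x (n + 3)) *
            (∑ j ∈ incrTuples s (n + 2),
              fac x c s (fun i => (j i : ℕ)) *
                Real.cos (∑ m ∈ Finset.Icc ((j (Fin.last s)) : ℕ) (n + 2), x m))
          - Real.sin (x (n + 3)) *
            (∑ j ∈ incrTuples s (n + 2),
              fac x c s (fun i => (j i : ℕ)) *
                Real.sin (∑ m ∈ Finset.Icc ((j (Fin.last s)) : ℕ) (n + 2), x m)) := by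
      intro s
      rw [Finset.mul_sum, Finset.mul_sum, ← Finset.sum_sub_distrib]
      refine Finset.sum_congr rfl fun j _ => ?_
      rw [cos_step x n _ (Fin.is_le _)]
      ring
    have hcastS : ∀ s : ℕ,
        (∑ j ∈ incrTuples s (n + 2),
          fac x c s (fun i => (j i : ℕ)) *
            Real.sin (∑ m ∈ Finset.Icc ((j (Fin.last s)) : ℕ) (n + 3), x m))
        = Real.cos (x (n + 3)) *
            (∑ j ∈ incrTuples s (n + 2),
              fac x c s (fun i => (j i : ℕ)) *
                Real.sin (∑ m ∈ Finset.Icc ((j (Fin.last s)) : ℕ) (n + 2), x m))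
          + Real.sin (x (n + 3)) *
            (∑ j ∈ incrTuples s (n + 2),
              fac x c s (fun i => (j i : ℕ)) *
                Real.cos (∑ m ∈ Finset.Icc ((j (Fin.last s)) : ℕ) (n + 2), x m)) := by
      intro s
      rw [Finset.mul_sum, Finset.mul_sum, ← Finset.sum_add_distrib]
      refine Finset.sum_congr rfl fun j _ => ?_
      rw [sin_step x n _ (Fin.is_le _)]
      ring
    -- snoc-part reduction
    have hsnocC : ∀ s : ℕ,
        (∑ j ∈ incrTuples s (n + 2),
          (fun v => fac x c (s + 1) v *
            Real.cos (∑ m ∈ Finset.Icc (v (Fin.last (s + 1))) (n + 3), x m))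
            (Fin.snoc (fun i => ((j i : ℕ))) (n + 3)))
        = (c (n + 3) * Real.cos (x (n + 3))) *
            ∑ j ∈ incrTuples s (n + 2),
              fac x c s (fun i => (j i : ℕ)) *
                Real.sin (∑ m ∈ Finset.Icc ((j (Fin.last s)) : ℕ) (n + 2), x m) := by
      intro s
      rw [Finset.mul_sum]
      refine Finset.sum_congr rfl fun j _ => ?_
      simp only [fac_snoc, Fin.snoc_last]
      rw [show (n + 3) - 1 = n + 2 from rfl, Finset.Icc_self, Finset.sum_singleton]
      ring
    have hsnocS : ∀ s : ℕ,
        (∑ j ∈ incrTuples s (n + 2),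
          (fun v => fac x c (s + 1) v *
            Real.sin (∑ m ∈ Finset.Icc (v (Fin.last (s + 1))) (n + 3), x m))
            (Fin.snoc (fun i => ((j i : ℕ))) (n + 3)))
        = (c (n + 3) * Real.sin (x (n + 3))) *
            ∑ j ∈ incrTuples s (n + 2),
              fac x c s (fun i => (j i : ℕ)) *
                Real.sin (∑ m ∈ Finset.Icc ((j (Fin.last s)) : ℕ) (n + 2), x m) := by
      intro s
      rw [Finset.mul_sum]
      refine Finset.sum_congr rfl fun j _ => ?_
      simp only [fac_snoc, Fin.snoc_last]
      rw [show (n + 3) - 1 = n + 2 from rfl, Finset.Icc_self, Finset.sum_singleton]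
      ring
    constructor
    · -- Δ component
      have unfoldD : (DeltaM x c (n + 1 + 2)).1
          = (-Real.cos (x (n + 3)) + c (n + 3) * Real.sin (x (n + 3))) *
              (DeltaM x c (n + 2)).1
            + Real.sin (x (n + 3)) * (DeltaM x c (n + 2)).2 := rfl
      rw [unfoldD, ihD, ihM]
      refine combineD n (Real.sin (x (n + 3))) (Real.cos (x (n + 3))) (c (n + 3))
        (fun s => ∑ j ∈ incrTuples s (n + 2),
          fac x c s (fun i => (j i : ℕ)) *
            Real.sin (∑ m ∈ Finset.Icc ((j (Fin.last s)) : ℕ) (n + 2), x m))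
        (fun s => ∑ j ∈ incrTuples s (n + 2),
          fac x c s (fun i => (j i : ℕ)) *
            Real.cos (∑ m ∈ Finset.Icc ((j (Fin.last s)) : ℕ) (n + 2), x m))
        (fun s => ∑ j ∈ incrTuples s (n + 3),
          fac x c s (fun i => (j i : ℕ)) *
            Real.sin (∑ m ∈ Finset.Icc ((j (Fin.last s)) : ℕ) (n + 3), x m))
        hA hB ?_ ?_
      · -- SS 0
        have e1 : (∑ j ∈ incrTuples 0 (n + 3),
            fac x c 0 (fun i => (j i : ℕ)) *
              Real.sin (∑ m ∈ Finset.Icc ((j (Fin.last 0)) : ℕ) (n + 3), x m))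
            = ∑ j ∈ incrTuples 0 (n + 2),
                fac x c 0 (fun i => (j i : ℕ)) *
                  Real.sin (∑ m ∈ Finset.Icc ((j (Fin.last 0)) : ℕ) (n + 3), x m) :=
          split0 n (fun v => fac x c 0 v *
            Real.sin (∑ m ∈ Finset.Icc (v (Fin.last 0)) (n + 3), x m))
        rw [e1, hcastS 0]
      · -- SS (s+1)
        intro s
        have e1 : (∑ j ∈ incrTuples (s + 1) (n + 3),
            fac x c (s + 1) (fun i => (j i : ℕ)) *
              Real.sin (∑ m ∈ Finset.Icc ((j (Fin.last (s + 1))) : ℕ) (n + 3), x m))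
            = (∑ j ∈ incrTuples (s + 1) (n + 2),
                fac x c (s + 1) (fun i => (j i : ℕ)) *
                  Real.sin (∑ m ∈ Finset.Icc ((j (Fin.last (s + 1))) : ℕ) (n + 3), x m))
              + ∑ j ∈ incrTuples s (n + 2),
                  (fun v => fac x c (s + 1) v *
                    Real.sin (∑ m ∈ Finset.Icc (v (Fin.last (s + 1))) (n + 3), x m))
                    (Fin.snoc (fun i => ((j i : ℕ))) (n + 3)) :=
          split s n (fun v => fac x c (s + 1) v *
            Real.sin (∑ m ∈ Finset.Icc (v (Fin.last (s + 1))) (n + 3), x m))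
        rw [e1, hcastS (s + 1), hsnocS s]
    · -- M component
      have unfoldM : (DeltaM x c (n + 1 + 2)).2
          = (-Real.sin (x (n + 3)) - c (n + 3) * Real.cos (x (n + 3))) *
              (DeltaM x c (n + 2)).1
            - Real.cos (x (n + 3)) * (DeltaM x c (n + 2)).2 := rfl
      rw [unfoldM, ihD, ihM]
      refine combineM n (Real.sin (x (n + 3))) (Real.cos (x (n + 3)))
        (c (n + 3) * Real.cos (x (n + 3)))
        (fun s => ∑ j ∈ incrTuples s (n + 2),
          fac x c s (fun i => (j i : ℕ)) *
            Real.sin (∑ m ∈ Finset.Icc ((j (Fin.last s)) : ℕ) (n + 2), x m))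
        (fun s => ∑ j ∈ incrTuples s (n + 2),
          fac x c s (fun i => (j i : ℕ)) *
            Real.cos (∑ m ∈ Finset.Icc ((j (Fin.last s)) : ℕ) (n + 2), x m))
        (fun s => ∑ j ∈ incrTuples s (n + 3),
          fac x c s (fun i => (j i : ℕ)) *
            Real.cos (∑ m ∈ Finset.Icc ((j (Fin.last s)) : ℕ) (n + 3), x m))
        hA hB ?_ ?_
      · have e1 : (∑ j ∈ incrTuples 0 (n + 3),
            fac x c 0 (fun i => (j i : ℕ)) *
              Real.cos (∑ m ∈ Finset.Icc ((j (Fin.last 0)) : ℕ) (n + 3), x m))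
            = ∑ j ∈ incrTuples 0 (n + 2),
                fac x c 0 (fun i => (j i : ℕ)) *
                  Real.cos (∑ m ∈ Finset.Icc ((j (Fin.last 0)) : ℕ) (n + 3), x m) :=
          split0 n (fun v => fac x c 0 v *
            Real.cos (∑ m ∈ Finset.Icc (v (Fin.last 0)) (n + 3), x m))
        rw [e1, hcastC 0]
      · intro s
        have e1 : (∑ j ∈ incrTuples (s + 1) (n + 3),
            fac x c (s + 1) (fun i => (j i : ℕ)) *
              Real.cos (∑ m ∈ Finset.Icc ((j (Fin.last (s + 1))) : ℕ) (n + 3), x m))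
            = (∑ j ∈ incrTuples (s + 1) (n + 2),
                fac x c (s + 1) (fun i => (j i : ℕ)) *
                  Real.cos (∑ m ∈ Finset.Icc ((j (Fin.last (s + 1))) : ℕ) (n + 3), x m))
              + ∑ j ∈ incrTuples s (n + 2),
                  (fun v => fac x c (s + 1) v *
                    Real.cos (∑ m ∈ Finset.Icc (v (Fin.last (s + 1))) (n + 3), x m))
                    (Fin.snoc (fun i => ((j i : ℕ))) (n + 3)) :=
          split s n (fun v => fac x c (s + 1) v *
            Real.cos (∑ m ∈ Finset.Icc (v (Fin.last (s + 1))) (n + 3), x m))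
        rw [e1, hcastC (s + 1), hsnocC s]

end Stmt10

/-- the closed-form expansion of `M_N` as a signed sum over strictly
increasing tuples `2 = j₀ < j₁ < ⋯ < j_s ≤ N`. -/
theorem stmt_10 (x c : ℕ → ℝ) :
    ∀ N : ℕ, 2 ≤ N →
      (DeltaM x c N).2 =
        ∑ s ∈ Finset.range (N - 1), (-1 : ℝ)^(N + s + 1) *
          ∑ j ∈ incrTuples s N,
            (∏ i : Fin s, c (j i.succ) *
                Real.sin (∑ m ∈ Finset.Icc (j i.castSucc : ℕ) ((j i.succ : ℕ) - 1), x m))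
              * Real.cos (∑ m ∈ Finset.Icc (j (Fin.last s) : ℕ) N, x m) := by
  intro N hN
  obtain ⟨n, rfl⟩ : ∃ n, N = n + 2 := ⟨N - 2, by omega⟩
  rw [(Stmt10.key x c n).2, show n + 2 - 1 = n + 1 from rfl]
  refine Finset.sum_congr rfl fun s _ => ?_
  have hpow : ((-1 : ℝ)) ^ (n + 2 + s + 1) = (-1) ^ (n + s + 1) := by
    rw [show n + 2 + s + 1 = (n + s + 1) + 2 by omega, pow_add]
    norm_num
  rw [hpow]
  rfl
end

section
/- Let N ≥ 2, x : ℕ → ℝ, c : ℕ → ℝ. Let S_N be the 2(N−1) × 2(N−1) real matrix whose entries are all zero except: row 1 has entry 1 in column 1; for each j = 2, …, N−1, row 2(j−1) has entries cos x_j, sin x_j, −1 in columns 2j−3, 2j−2, 2j−1 respectively, and row 2j−1 has entries sin x_j, −cos x_j, c_{j+1}, 1 in columns 2j−3, 2j−2, 2j−1, 2j respectively; and row 2(N−1) has entries cos x_N, sin x_N in columns 2N−3, 2N−2. Let S̃_N be the same matrix except that its last row has entries sin x_N, −cos x_N in columns 2N−3, 2N−2. Define Δ, M by Δ₂ := sin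 x₂, M₂ := −cos x₂, and for N ≥ 3: Δ_N := (−cos x_N + c_N sin x_N) Δ_{N−1} + (sin x_N) M_{N−1}, M_N := (−sin x_N − c_N cos x_N) Δ_{N−1} − (cos x_N) M_{N−1}. Then det S_N = Δ_N and det S̃_N = M_N for every N ≥ 2. -/
open Real

/-- Entry of the matrix `S_N` in row `r`, column `k` (both 1-indexed, `1 ≤ r, k ≤ 2(N−1)`):
row `1` has a `1` in column `1`; for `j = 2, …, N−1`, row `2(j−1)` has `cos x_j, sin x_j, −1`
in columns `2j−3, 2j−2, 2j−1`, and row `2j−1` has `sin x_j, −cos x_j, c_{j+1}, 1` in columns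
`2j−3, 2j−2, 2j−1, 2j`; the last row `2(N−1)` has `cos x_N, sin x_N` in columns
`2N−3, 2N−2`. -/
noncomputable def Sentry (N : ℕ) (x c : ℕ → ℝ) (r k : ℕ) : ℝ :=
  if r = 1 then (if k = 1 then 1 else 0)
  else if r = 2*(N - 1) then
    (if k = 2*N - 3 then Real.cos (x N) else if k = 2*N - 2 then Real.sin (x N) else 0)
  else if r % 2 = 0 then
    (if k = 2*(r/2 + 1) - 3 then Real.cos (x (r/2 + 1))
     else if k = 2*(r/2 + 1) - 2 then Real.sin (x (r/2 + 1))
     else if k = 2*(r/2 + 1) - 1 then -1 else 0)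
  else
    (if k = 2*((r + 1)/2) - 3 then Real.sin (x ((r + 1)/2))
     else if k = 2*((r + 1)/2) - 2 then -Real.cos (x ((r + 1)/2))
     else if k = 2*((r + 1)/2) - 1 then c ((r + 1)/2 + 1)
     else if k = 2*((r + 1)/2) then 1 else 0)

/-- The matrix `S_N`. -/
noncomputable def SMat (N : ℕ) (x c : ℕ → ℝ) :
    Matrix (Fin (2*(N - 1))) (Fin (2*(N - 1))) ℝ :=
  fun r k => Sentry N x c ((r : ℕ) + 1) ((k : ℕ) + 1)

/-- The matrix `S̃_N`: same as `S_N` except that the last row has entries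
`sin x_N, −cos x_N` in columns `2N−3, 2N−2`. -/
noncomputable def SMatTilde (N : ℕ) (x c : ℕ → ℝ) :
    Matrix (Fin (2*(N - 1))) (Fin (2*(N - 1))) ℝ :=
  fun r k =>
    if (r : ℕ) + 1 = 2*(N - 1) then
      (if (k : ℕ) + 1 = 2*N - 3 then Real.sin (x N)
       else if (k : ℕ) + 1 = 2*N - 2 then -Real.cos (x N) else 0)
    else Sentry N x c ((r : ℕ) + 1) ((k : ℕ) + 1)

lemma val_succAbove {n : ℕ} (p : Fin (n+1)) (i : Fin n) :
    ((p.succAbove i : Fin (n+1)) : ℕ) = if (i : ℕ) < (p : ℕ) then (i : ℕ) else (i : ℕ) + 1 := by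
  simp only [Fin.succAbove, Fin.lt_def, Fin.coe_castSucc]
  split_ifs <;> simp

lemma det_helper (m : ℕ) (B : Matrix (Fin (m+3)) (Fin (m+3)) ℝ)
    (A : Matrix (Fin (m+1)) (Fin (m+1)) ℝ) (r : Fin (m+1) → ℝ) (c' p q : ℝ)
    (h1 : ∀ (i j : Fin (m+3)) (hi : (i:ℕ) < m+1) (hj : (j:ℕ) < m+1),
        B i j = A ⟨(i:ℕ), hi⟩ ⟨(j:ℕ), hj⟩)
    (h2 : ∀ (i j : Fin (m+3)), (i:ℕ) < m+1 → (j:ℕ) = m+1 →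
        B i j = (if (i:ℕ) = m then -1 else 0))
    (h3 : ∀ (i j : Fin (m+3)), (i:ℕ) < m+1 → (j:ℕ) = m+2 → B i j = 0)
    (h4 : ∀ (i j : Fin (m+3)) (hi : (i:ℕ) = m+1) (hj : (j:ℕ) < m+1),
        B i j = r ⟨(j:ℕ), hj⟩)
    (h5 : ∀ (i j : Fin (m+3)), (i:ℕ) = m+1 → (j:ℕ) = m+1 → B i j = c')
    (h6 : ∀ (i j : Fin (m+3)), (i:ℕ) = m+1 → (j:ℕ) = m+2 → B i j = 1)
    (h7 : ∀ (i j : Fin (m+3)), (i:ℕ) = m+2 → (j:ℕ) < m+1 → B i j = 0)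
    (h8 : ∀ (i j : Fin (m+3)), (i:ℕ) = m+2 → (j:ℕ) = m+1 → B i j = p)
    (h9 : ∀ (i j : Fin (m+3)), (i:ℕ) = m+2 → (j:ℕ) = m+2 → B i j = q) :
    B.det = -p * A.det + q * (c' * A.det + (A.updateRow (Fin.last m) r).det) := by
  have hML : (⟨m+1, by omega⟩ : Fin (m+3)) ≠ Fin.last (m+2) := by
    simp [Fin.ext_iff]
  rw [Matrix.det_succ_column B (Fin.last (m+2)),
      Fintype.sum_eq_add (⟨m+1, by omega⟩ : Fin (m+3)) (Fin.last (m+2)) hML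
        (fun i hi => by
          have hi1 : (i:ℕ) ≠ m+1 := fun h => hi.1 (Fin.ext h)
          have hi2 : (i:ℕ) ≠ m+2 := fun h => hi.2 (Fin.ext h)
          have : (i:ℕ) < m+1 := by omega
          rw [h3 i (Fin.last (m+2)) this rfl]; ring)]
  -- evaluate the two surviving terms
  have e6 : B ⟨m+1, by omega⟩ (Fin.last (m+2)) = 1 := h6 _ _ rfl rfl
  have e9 : B (Fin.last (m+2)) (Fin.last (m+2)) = q := h9 _ _ rfl rfl
  rw [e6, e9]
  have sgn1 : ((-1 : ℝ)) ^ (((⟨m+1, by omega⟩ : Fin (m+3)) : ℕ) + ((Fin.last (m+2) : Fin (m+3)) : ℕ)) = -1 := by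
    show ((-1:ℝ)) ^ ((m+1) + (m+2)) = -1
    exact Odd.neg_one_pow ⟨m+1, by ring⟩
  have sgn2 : ((-1 : ℝ)) ^ (((Fin.last (m+2) : Fin (m+3)) : ℕ) + ((Fin.last (m+2) : Fin (m+3)) : ℕ)) = 1 := by
    show ((-1:ℝ)) ^ ((m+2) + (m+2)) = 1
    exact Even.neg_one_pow ⟨m+2, by ring⟩
  rw [sgn1, sgn2]
  -- the D determinant : det (B.submatrix (succAbove ⟨m+1⟩) (succAbove last)) = p * A.det
  have hD : (B.submatrix (Fin.succAbove ⟨m+1, by omega⟩) (Fin.succAbove (Fin.last (m+2)))).det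
      = p * A.det := by
    set D := B.submatrix (Fin.succAbove ⟨m+1, by omega⟩) (Fin.succAbove (Fin.last (m+2))) with hDdef
    have hrowlast : ∀ j : Fin (m+2), ((Fin.succAbove (⟨m+1, by omega⟩ : Fin (m+3)) (Fin.last (m+1))) : ℕ) = m+2 := by
      intro _; rw [val_succAbove]; simp
    rw [Matrix.det_succ_row D (Fin.last (m+1)),
        Fintype.sum_eq_single (Fin.last (m+1))
          (fun j hj => by
            have hjv : (j:ℕ) < m+1 := by
              have := j.isLt
              have : (j:ℕ) ≠ m+1 := fun h => hj (Fin.ext h)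
              omega
            have : D (Fin.last (m+1)) j = 0 := by
              rw [hDdef]
              show B _ _ = 0
              apply h7
              · exact hrowlast j
              · rw [Fin.succAbove_last, Fin.coe_castSucc]; exact hjv
            rw [this]; ring)]
    have hent : D (Fin.last (m+1)) (Fin.last (m+1)) = p := by
      rw [hDdef]; show B _ _ = p
      apply h8
      · exact hrowlast (Fin.last (m+1))
      · rw [Fin.succAbove_last, Fin.coe_castSucc]; rfl
    have hsub : D.submatrix (Fin.succAbove (Fin.last (m+1))) (Fin.succAbove (Fin.last (m+1))) = A := by
      ext i j
      rw [hDdef]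
      simp only [Matrix.submatrix_apply, Fin.succAbove_last]
      rw [h1 _ _ (by rw [val_succAbove]; simp [i.isLt]) (by simp [j.isLt])]
      congr 1 <;> apply Fin.ext <;> simp [val_succAbove, i.isLt]
    rw [hent, hsub]
    have : ((-1:ℝ)) ^ (((Fin.last (m+1) : Fin (m+2)) : ℕ) + ((Fin.last (m+1) : Fin (m+2)) : ℕ)) = 1 := by
      show ((-1:ℝ)) ^ ((m+1)+(m+1)) = 1
      exact Even.neg_one_pow ⟨m+1, by ring⟩
    rw [this]; ring
  -- the C determinant
  have hC : (B.submatrix (Fin.succAbove (Fin.last (m+2))) (Fin.succAbove (Fin.last (m+2)))).det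
      = c' * A.det + (A.updateRow (Fin.last m) r).det := by
    set C := B.submatrix (Fin.succAbove (Fin.last (m+2))) (Fin.succAbove (Fin.last (m+2))) with hCdef
    have hCe : ∀ (i j : Fin (m+2)), C i j = B i.castSucc j.castSucc := by
      intro i j; rw [hCdef]; simp [Fin.succAbove_last]
    have hne : (⟨m, by omega⟩ : Fin (m+2)) ≠ Fin.last (m+1) := by simp [Fin.ext_iff]
    rw [Matrix.det_succ_column C (Fin.last (m+1)),
        Fintype.sum_eq_add (⟨m, by omega⟩ : Fin (m+2)) (Fin.last (m+1)) hne
          (fun i hi => by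
            have hi1 : (i:ℕ) ≠ m := fun h => hi.1 (Fin.ext h)
            have hi2 : (i:ℕ) ≠ m+1 := fun h => hi.2 (Fin.ext h)
            have hiv : (i:ℕ) < m+1 := by have := i.isLt; omega
            have : C i (Fin.last (m+1)) = 0 := by
              rw [hCe, h2 _ _ (by simpa using hiv) (by simp)]
              simp [hi1]
            rw [this]; ring)]
    have ent1 : C ⟨m, by omega⟩ (Fin.last (m+1)) = -1 := by
      rw [hCe, h2 _ _ (by simp) (by simp)]; simp
    have ent2 : C (Fin.last (m+1)) (Fin.last (m+1)) = c' := by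
      rw [hCe]; exact h5 _ _ (by simp) (by simp)
    rw [ent1, ent2]
    have sgn3 : ((-1:ℝ)) ^ (((⟨m, by omega⟩ : Fin (m+2)) : ℕ) + ((Fin.last (m+1) : Fin (m+2)) : ℕ)) = -1 := by
      show ((-1:ℝ)) ^ (m + (m+1)) = -1
      exact Odd.neg_one_pow ⟨m, by ring⟩
    have sgn4 : ((-1:ℝ)) ^ (((Fin.last (m+1) : Fin (m+2)) : ℕ) + ((Fin.last (m+1) : Fin (m+2)) : ℕ)) = 1 := by
      show ((-1:ℝ)) ^ ((m+1)+(m+1)) = 1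
      exact Even.neg_one_pow ⟨m+1, by ring⟩
    rw [sgn3, sgn4]
    have hsubU : C.submatrix (Fin.succAbove ⟨m, by omega⟩) (Fin.succAbove (Fin.last (m+1)))
        = A.updateRow (Fin.last m) r := by
      ext i j
      simp only [Matrix.submatrix_apply, Fin.succAbove_last]
      rw [hCe]
      by_cases him : (i:ℕ) < m
      · have hrow : ((Fin.succAbove (⟨m, by omega⟩ : Fin (m+2)) i) : ℕ) = (i:ℕ) := by
          rw [val_succAbove]; simp [him]
        rw [h1 _ _ (by simp [hrow]; omega) (by simp [j.isLt])]
        rw [Matrix.updateRow_ne (by simp only [ne_eq, Fin.ext_iff]; simp; omega)]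
        congr 1 <;> apply Fin.ext <;> simp [hrow]
      · have him' : (i:ℕ) = m := by have := i.isLt; omega
        have hrow : ((Fin.succAbove (⟨m, by omega⟩ : Fin (m+2)) i) : ℕ) = m+1 := by
          rw [val_succAbove]; simp [him']
        rw [h4 _ _ (by simpa using hrow) (by simp [j.isLt])]
        have : i = Fin.last m := Fin.ext him'
        rw [this, Matrix.updateRow_self]
        simp
    have hsubA : C.submatrix (Fin.succAbove (Fin.last (m+1))) (Fin.succAbove (Fin.last (m+1))) = A := by
      ext i j
      simp only [Matrix.submatrix_apply, Fin.succAbove_last]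
      rw [hCe, h1 _ _ (by simp [i.isLt]) (by simp [j.isLt])]
      congr 1 <;> apply Fin.ext <;> simp
    rw [hsubU, hsubA]
    ring
  rw [hD, hC]
  ring


lemma tilde_eq_off (N : ℕ) (x c : ℕ → ℝ) (i j : Fin (2*(N-1)))
    (h : (i:ℕ) + 1 ≠ 2*(N-1)) : SMatTilde N x c i j = SMat N x c i j := by
  simp only [SMatTilde, SMat]
  rw [if_neg h]

section EntryLemmas

variable (x c : ℕ → ℝ) (k : ℕ)

set_option maxHeartbeats 1000000 in
lemma entry_H1 : ∀ (i j : Fin (2*k+4)) (hi : (i:ℕ) < 2*k+2) (hj : (j:ℕ) < 2*k+2),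
    SMat (k+3) x c i j = SMat (k+2) x c ⟨(i:ℕ), hi⟩ ⟨(j:ℕ), hj⟩ := by
  intro i j hi hj
  simp only [SMat, Sentry]
  split_ifs <;>
    first
      | rfl | omega | (congr 1 <;> omega)
      | (congr 1 <;> congr 1 <;> omega)
      | (congr 1 <;> congr 1 <;> congr 1 <;> omega)

set_option maxHeartbeats 1000000 in
lemma entry_H2 : ∀ (i j : Fin (2*k+4)), (i:ℕ) < 2*k+2 → (j:ℕ) = 2*k+2 →
    SMat (k+3) x c i j = (if (i:ℕ) = 2*k+1 then -1 else 0) := by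
  intro i j hi hj
  simp only [SMat, Sentry]
  split_ifs <;> first | rfl | omega

set_option maxHeartbeats 1000000 in
lemma entry_H3 : ∀ (i j : Fin (2*k+4)), (i:ℕ) < 2*k+2 → (j:ℕ) = 2*k+3 →
    SMat (k+3) x c i j = 0 := by
  intro i j hi hj
  simp only [SMat, Sentry]
  split_ifs <;> first | rfl | omega

set_option maxHeartbeats 1000000 in
lemma entry_H4 : ∀ (i j : Fin (2*k+4)) (hi : (i:ℕ) = 2*k+2) (hj : (j:ℕ) < 2*k+2),
    SMat (k+3) x c i j =
      (if (j:ℕ) = 2*k then Real.sin (x (k+2))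
       else if (j:ℕ) = 2*k+1 then -Real.cos (x (k+2)) else 0) := by
  intro i j hi hj
  simp only [SMat, Sentry]
  split_ifs <;>
    first
      | rfl | omega | (congr 1 <;> omega)
      | (congr 1 <;> congr 1 <;> omega)
      | (congr 1 <;> congr 1 <;> congr 1 <;> omega)

set_option maxHeartbeats 1000000 in
lemma entry_H5 : ∀ (i j : Fin (2*k+4)), (i:ℕ) = 2*k+2 → (j:ℕ) = 2*k+2 →
    SMat (k+3) x c i j = c (k+3) := by
  intro i j hi hj
  simp only [SMat, Sentry]
  split_ifs <;> first | rfl | omega | (congr 1 <;> omega)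

set_option maxHeartbeats 1000000 in
lemma entry_H6 : ∀ (i j : Fin (2*k+4)), (i:ℕ) = 2*k+2 → (j:ℕ) = 2*k+3 →
    SMat (k+3) x c i j = 1 := by
  intro i j hi hj
  simp only [SMat, Sentry]
  split_ifs <;> first | rfl | omega

set_option maxHeartbeats 1000000 in
lemma entry_H7 : ∀ (i j : Fin (2*k+4)), (i:ℕ) = 2*k+3 → (j:ℕ) < 2*k+2 →
    SMat (k+3) x c i j = 0 := by
  intro i j hi hj
  simp only [SMat, Sentry]
  split_ifs <;> first | rfl | omega

set_option maxHeartbeats 1000000 in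
lemma entry_H8 : ∀ (i j : Fin (2*k+4)), (i:ℕ) = 2*k+3 → (j:ℕ) = 2*k+2 →
    SMat (k+3) x c i j = Real.cos (x (k+3)) := by
  intro i j hi hj
  simp only [SMat, Sentry]
  split_ifs <;>
    first
      | rfl | omega
      | (congr 1 <;> congr 1 <;> omega)

set_option maxHeartbeats 1000000 in
lemma entry_H9 : ∀ (i j : Fin (2*k+4)), (i:ℕ) = 2*k+3 → (j:ℕ) = 2*k+3 →
    SMat (k+3) x c i j = Real.sin (x (k+3)) := by
  intro i j hi hj
  simp only [SMat, Sentry]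
  split_ifs <;>
    first
      | rfl | omega
      | (congr 1 <;> congr 1 <;> omega)

set_option maxHeartbeats 1000000 in
lemma entry_H7' : ∀ (i j : Fin (2*k+4)), (i:ℕ) = 2*k+3 → (j:ℕ) < 2*k+2 →
    SMatTilde (k+3) x c i j = 0 := by
  intro i j hi hj
  simp only [SMatTilde]
  rw [if_pos (by omega)]
  split_ifs <;> first | rfl | omega

set_option maxHeartbeats 1000000 in
lemma entry_H8' : ∀ (i j : Fin (2*k+4)), (i:ℕ) = 2*k+3 → (j:ℕ) = 2*k+2 →
    SMatTilde (k+3) x c i j = Real.sin (x (k+3)) := by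
  intro i j hi hj
  simp only [SMatTilde]
  rw [if_pos (by omega)]
  split_ifs <;> first | rfl | omega

set_option maxHeartbeats 1000000 in
lemma entry_H9' : ∀ (i j : Fin (2*k+4)), (i:ℕ) = 2*k+3 → (j:ℕ) = 2*k+3 →
    SMatTilde (k+3) x c i j = -Real.cos (x (k+3)) := by
  intro i j hi hj
  simp only [SMatTilde]
  rw [if_pos (by omega)]
  split_ifs <;> first | rfl | omega

set_option maxHeartbeats 1000000 in
lemma entry_upd :
    Matrix.updateRow (m := Fin (2*k+1+1)) (n := Fin (2*k+1+1)) (α := ℝ)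
        (SMat (k+2) x c) (Fin.last (2*k+1))
        (fun j => if (j:ℕ) = 2*k then Real.sin (x (k+2))
          else if (j:ℕ) = 2*k+1 then -Real.cos (x (k+2)) else 0)
      = SMatTilde (k+2) x c := by
  ext i j
  by_cases hil : (i:ℕ) = 2*k+1
  · have hi : i = Fin.last (2*k+1) := Fin.ext hil
    rw [hi, Matrix.updateRow_self]
    simp only [SMatTilde, Fin.val_last]
    split_ifs <;> first | rfl | omega | (exfalso; omega)
  · rw [Matrix.updateRow_ne (by simp [Fin.ext_iff]; omega)]
    rw [tilde_eq_off (k+2) x c i j (by omega)]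

end EntryLemmas

set_option maxHeartbeats 1000000 in
/-- `det S_N = Δ_N` and `det S̃_N = M_N` for every `N ≥ 2`. -/
theorem stmt_11 (x c : ℕ → ℝ) (N : ℕ) (hN : 2 ≤ N) :
    Matrix.det (SMat N x c) = (DeltaM x c N).1
      ∧ Matrix.det (SMatTilde N x c) = (DeltaM x c N).2 := by
  obtain ⟨k, rfl⟩ : ∃ k, N = k + 2 := ⟨N - 2, by omega⟩
  clear hN
  induction k with
  | zero =>
      constructor
      · rw [Matrix.det_fin_two]
        simp [SMat, Sentry, DeltaM]
      · rw [Matrix.det_fin_two]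
        simp [SMatTilde, SMat, Sentry, DeltaM]
  | succ k ih =>
      show Matrix.det (SMat (k+3) x c) = (DeltaM x c (k+3)).1
          ∧ Matrix.det (SMatTilde (k+3) x c) = (DeltaM x c (k+3)).2
      have hoff : ∀ i : Fin (2*k+4), (i:ℕ) < 2*k+3 →
          ∀ j : Fin (2*k+4), SMatTilde (k+3) x c i j = SMat (k+3) x c i j := by
        intro i hi j
        exact tilde_eq_off (k+3) x c i j (by omega)
      have key := det_helper (2*k+1) (SMat (k+3) x c) (SMat (k+2) x c)
        (fun j => if (j:ℕ) = 2*k then Real.sin (x (k+2))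
          else if (j:ℕ) = 2*k+1 then -Real.cos (x (k+2)) else 0)
        (c (k+3)) (Real.cos (x (k+3))) (Real.sin (x (k+3)))
        (entry_H1 x c k) (entry_H2 x c k) (entry_H3 x c k) (entry_H4 x c k)
        (entry_H5 x c k) (entry_H6 x c k) (entry_H7 x c k) (entry_H8 x c k)
        (entry_H9 x c k)
      have keyT := det_helper (2*k+1) (SMatTilde (k+3) x c) (SMat (k+2) x c)
        (fun j => if (j:ℕ) = 2*k then Real.sin (x (k+2))
          else if (j:ℕ) = 2*k+1 then -Real.cos (x (k+2)) else 0)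
        (c (k+3)) (Real.sin (x (k+3))) (-Real.cos (x (k+3)))
        (fun i j hi hj => by rw [hoff i (by omega) j]; exact entry_H1 x c k i j hi hj)
        (fun i j hi hj => by rw [hoff i (by omega) j]; exact entry_H2 x c k i j hi hj)
        (fun i j hi hj => by rw [hoff i (by omega) j]; exact entry_H3 x c k i j hi hj)
        (fun i j hi hj => by rw [hoff i (by omega) j]; exact entry_H4 x c k i j hi hj)
        (fun i j hi hj => by rw [hoff i (by omega) j]; exact entry_H5 x c k i j hi hj)
        (fun i j hi hj => by rw [hoff i (by omega) j]; exact entry_H6 x c k i j hi hj)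
        (entry_H7' x c k) (entry_H8' x c k) (entry_H9' x c k)
      obtain ⟨ihD, ihM⟩ := ih
      have ihD' : Matrix.det (n := Fin (2*k+1+1)) (SMat (k+2) x c)
          = (DeltaM x c (k+2)).1 := ihD
      have eupd : Matrix.det (n := Fin (2*k+1+1))
          (Matrix.updateRow (m := Fin (2*k+1+1)) (n := Fin (2*k+1+1)) (α := ℝ)
            (SMat (k+2) x c) (Fin.last (2*k+1))
            (fun j => if (j:ℕ) = 2*k then Real.sin (x (k+2))
              else if (j:ℕ) = 2*k+1 then -Real.cos (x (k+2)) else 0))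
          = (DeltaM x c (k+2)).2 := by
        rw [entry_upd x c k]
        exact ihM
      rw [ihD', eupd] at key keyT
      refine ⟨key.trans ?_, keyT.trans ?_⟩
      · simp only [DeltaM]
        ring
      · simp only [DeltaM]
        ring
end

section
/- Let N ≥ 2, let ℓ_1, …, ℓ_N > 0, let β be a nonzero real number, and let m_2, …, m_N > 0 satisfy m_j β² ≠ 1 for every j ∈ {2, …, N}. Suppose y_j : [0, ℓ_j] → ℂ are twice continuously differentiable with y_j''(x) + β² y_j(x) = 0 on [0, ℓ_j] for each j ∈ {1, …, N}, and p_j, q_j ∈ ℂ for j ∈ {2, …, N}, satisfying: y_j(0) = y_{j−1}(ℓ_{j−1}) and y_j'(0) − y_{j−1}'(ℓ_{j−1}) = q_j for j ∈ {2, …, N}; q_j = i β p_j and (m_j β² − 1) p_j = i β y_j(0) for j ∈ {2, …, N}; y_1'(0) = i β y_1(0); and y_N(ℓ_N) = 0. Then y_j ≡ 0 on [0, ℓ_j] for every j ∈ {1, …, N}, and p_j = q_j = 0 for every j ∈ {2, …, N}. -/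
open Set Complex


lemma phi_const {L : ℝ} (hL : 0 < L) (β : ℝ) {y : ℝ → ℂ}
    (hy : ContDiffOn ℝ 2 y (Icc 0 L))
    (hode : ∀ x ∈ Icc (0:ℝ) L,
      derivWithin (derivWithin y (Icc 0 L)) (Icc 0 L) x + (β:ℂ)^2 * y x = 0) :
    ∀ x ∈ Icc (0:ℝ) L,
      ((starRingEnd ℂ) (y x) * derivWithin y (Icc 0 L) x).im
        = ((starRingEnd ℂ) (y 0) * derivWithin y (Icc 0 L) 0).im := by
  have hUD : UniqueDiffOn ℝ (Icc (0:ℝ) L) := uniqueDiffOn_Icc hL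
  have hdy : DifferentiableOn ℝ y (Icc 0 L) := hy.differentiableOn (by norm_num)
  have hdy' : DifferentiableOn ℝ (derivWithin y (Icc 0 L)) (Icc 0 L) :=
    (hy.derivWithin (m := 1) hUD (by norm_num)).differentiableOn one_ne_zero
  set y' := derivWithin y (Icc 0 L) with hy'def
  set Φ : ℝ → ℝ := fun x => ((starRingEnd ℂ) (y x) * y' x).im with hΦ
  have key : ∀ x ∈ Icc (0:ℝ) L, HasDerivWithinAt Φ 0 (Icc 0 L) x := by
    intro x hx
    have h1 : HasDerivWithinAt y (y' x) (Icc 0 L) x := (hdy x hx).hasDerivWithinAt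
    have h2 : HasDerivWithinAt y' (derivWithin y' (Icc 0 L) x) (Icc 0 L) x :=
      (hdy' x hx).hasDerivWithinAt
    have h2' : derivWithin y' (Icc 0 L) x = -((β:ℂ)^2 * y x) := by
      have h := hode x hx; linear_combination h
    rw [h2'] at h2
    have h3 : HasDerivWithinAt (fun t => (starRingEnd ℂ) (y t)) ((starRingEnd ℂ) (y' x))
        (Icc 0 L) x := h1.star
    have h4 : HasDerivWithinAt (fun t => (starRingEnd ℂ) (y t) * y' t)
        ((starRingEnd ℂ) (y' x) * y' x + (starRingEnd ℂ) (y x) * (-((β:ℂ)^2 * y x)))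
        (Icc 0 L) x := h3.mul h2
    have h6 : Complex.imCLM ((starRingEnd ℂ) (y' x) * y' x
        + (starRingEnd ℂ) (y x) * (-((β:ℂ)^2 * y x))) = 0 := by
      simp [Complex.mul_im, Complex.mul_re, pow_two]; ring
    have h5 : HasDerivWithinAt Φ (Complex.imCLM ((starRingEnd ℂ) (y' x) * y' x
        + (starRingEnd ℂ) (y x) * (-((β:ℂ)^2 * y x)))) (Icc 0 L) x :=
      Complex.imCLM.hasFDerivAt.comp_hasDerivWithinAt x h4
    rwa [h6] at h5
  have hconst := constant_of_derivWithin_zero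
    (f := Φ) (a := 0) (b := L)
    (fun x hx => (key x hx).differentiableWithinAt)
    (fun x hx => (key x (Ico_subset_Icc_self hx)).derivWithin (hUD x (Ico_subset_Icc_self hx)))
  exact hconst

lemma zero_sol {L : ℝ} (hL : 0 < L) {β : ℝ} (hβ : β ≠ 0) {y : ℝ → ℂ}
    (hy : ContDiffOn ℝ 2 y (Icc 0 L))
    (hode : ∀ x ∈ Icc (0:ℝ) L,
      derivWithin (derivWithin y (Icc 0 L)) (Icc 0 L) x + (β:ℂ)^2 * y x = 0)
    (h0 : y 0 = 0) (h0' : derivWithin y (Icc 0 L) 0 = 0) :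
    ∀ x ∈ Icc (0:ℝ) L, y x = 0 ∧ derivWithin y (Icc 0 L) x = 0 := by
  have hUD : UniqueDiffOn ℝ (Icc (0:ℝ) L) := uniqueDiffOn_Icc hL
  have hdy : DifferentiableOn ℝ y (Icc 0 L) := hy.differentiableOn (by norm_num)
  have hdy' : DifferentiableOn ℝ (derivWithin y (Icc 0 L)) (Icc 0 L) :=
    (hy.derivWithin (m := 1) hUD (by norm_num)).differentiableOn one_ne_zero
  set y' := derivWithin y (Icc 0 L) with hy'def
  set F : ℝ → ℂ := fun x => (β:ℂ)^2 * (y x * (starRingEnd ℂ) (y x))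
      + y' x * (starRingEnd ℂ) (y' x) with hF
  have key : ∀ x ∈ Icc (0:ℝ) L, HasDerivWithinAt F 0 (Icc 0 L) x := by
    intro x hx
    have h1 : HasDerivWithinAt y (y' x) (Icc 0 L) x := (hdy x hx).hasDerivWithinAt
    have h2 : HasDerivWithinAt y' (derivWithin y' (Icc 0 L) x) (Icc 0 L) x :=
      (hdy' x hx).hasDerivWithinAt
    have h2' : derivWithin y' (Icc 0 L) x = -((β:ℂ)^2 * y x) := by
      have h := hode x hx; linear_combination h
    rw [h2'] at h2
    have t1 : HasDerivWithinAt (fun t => (β:ℂ)^2 * (y t * (starRingEnd ℂ) (y t)))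
        ((β:ℂ)^2 * (y' x * (starRingEnd ℂ) (y x) + y x * (starRingEnd ℂ) (y' x)))
        (Icc 0 L) x := (h1.mul h1.star).const_mul _
    have t2 : HasDerivWithinAt (fun t => y' t * (starRingEnd ℂ) (y' t))
        ((-((β:ℂ)^2 * y x)) * (starRingEnd ℂ) (y' x)
          + y' x * (starRingEnd ℂ) (-((β:ℂ)^2 * y x))) (Icc 0 L) x := h2.mul h2.star
    have hsum := t1.add t2
    have hval : (β:ℂ)^2 * (y' x * (starRingEnd ℂ) (y x) + y x * (starRingEnd ℂ) (y' x))
        + ((-((β:ℂ)^2 * y x)) * (starRingEnd ℂ) (y' x)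
          + y' x * (starRingEnd ℂ) (-((β:ℂ)^2 * y x))) = 0 := by
      simp only [map_neg, map_mul, map_pow, Complex.conj_ofReal]
      ring
    rw [hval] at hsum
    exact hsum
  have hconst := constant_of_derivWithin_zero (f := F) (a := 0) (b := L)
    (fun x hx => (key x hx).differentiableWithinAt)
    (fun x hx => (key x (Ico_subset_Icc_self hx)).derivWithin (hUD x (Ico_subset_Icc_self hx)))
  have hF0 : F 0 = 0 := by simp [hF, h0, h0']
  intro x hx
  have hx0 : F x = 0 := (hconst x hx).trans hF0
  have hre : β^2 * Complex.normSq (y x) + Complex.normSq (y' x) = 0 := by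
    have : F x = ((β^2 * Complex.normSq (y x) + Complex.normSq (y' x) : ℝ) : ℂ) := by
      simp [hF, Complex.mul_conj]
      try push_cast
      try ring
    rw [this] at hx0
    exact_mod_cast hx0
  have hb2 : 0 < β^2 := by positivity
  have hn1 : Complex.normSq (y x) = 0 := by
    nlinarith [Complex.normSq_nonneg (y x), Complex.normSq_nonneg (y' x)]
  have hn2 : Complex.normSq (y' x) = 0 := by nlinarith [Complex.normSq_nonneg (y x)]
  exact ⟨Complex.normSq_eq_zero.mp hn1, Complex.normSq_eq_zero.mp hn2⟩

/-- the eigenvalue problem `A z = i β z` for a chain of `N` strings coupled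
through point masses `m_j` at the interior nodes, with dissipative feedback at the first
node and a Dirichlet condition at the last node, has only the trivial solution when
`m_j β² ≠ 1` for all `j`. -/
theorem stmt_12 (N : ℕ) (hN : 2 ≤ N)
    (ℓ : ℕ → ℝ) (hℓ : ∀ j, 1 ≤ j → j ≤ N → 0 < ℓ j)
    (β : ℝ) (hβ : β ≠ 0)
    (m : ℕ → ℝ) (hm : ∀ j, 2 ≤ j → j ≤ N → 0 < m j)
    (hmβ : ∀ j, 2 ≤ j → j ≤ N → m j * β^2 ≠ 1)
    (y : ℕ → ℝ → ℂ)
    (hy : ∀ j, 1 ≤ j → j ≤ N → ContDiffOn ℝ 2 (y j) (Icc 0 (ℓ j)))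
    (hode : ∀ j, 1 ≤ j → j ≤ N → ∀ x ∈ Icc (0:ℝ) (ℓ j),
      derivWithin (derivWithin (y j) (Icc 0 (ℓ j))) (Icc 0 (ℓ j)) x
        + (β : ℂ)^2 * y j x = 0)
    (p q : ℕ → ℂ)
    -- continuity at the interior nodes
    (hcont : ∀ j, 2 ≤ j → j ≤ N → y j 0 = y (j - 1) (ℓ (j - 1)))
    -- jump of the derivatives at the interior nodes
    (hjump : ∀ j, 2 ≤ j → j ≤ N →
      derivWithin (y j) (Icc 0 (ℓ j)) 0
        - derivWithin (y (j - 1)) (Icc 0 (ℓ (j - 1))) (ℓ (j - 1)) = q j)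
    -- the point-mass relations
    (hq : ∀ j, 2 ≤ j → j ≤ N → q j = Complex.I * β * p j)
    (hp : ∀ j, 2 ≤ j → j ≤ N → ((m j : ℂ) * (β : ℂ)^2 - 1) * p j
        = Complex.I * β * y j 0)
    -- dissipative feedback at the first node
    (hfb : derivWithin (y 1) (Icc 0 (ℓ 1)) 0 = Complex.I * β * y 1 0)
    -- Dirichlet condition at the last node
    (hdir : y N (ℓ N) = 0) :
    (∀ j, 1 ≤ j → j ≤ N → ∀ x ∈ Icc (0:ℝ) (ℓ j), y j x = 0)
      ∧ (∀ j, 2 ≤ j → j ≤ N → p j = 0 ∧ q j = 0) := by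
  set Φ : ℕ → ℝ → ℝ := fun j x =>
    ((starRingEnd ℂ) (y j x) * derivWithin (y j) (Icc 0 (ℓ j)) x).im with hΦ
  have hphi : ∀ j, 1 ≤ j → j ≤ N → ∀ x ∈ Icc (0:ℝ) (ℓ j), Φ j x = Φ j 0 :=
    fun j h1 h2 => phi_const (hℓ j h1 h2) β (hy j h1 h2) (hode j h1 h2)
  have hmem0 : ∀ j, 1 ≤ j → j ≤ N → (0:ℝ) ∈ Icc (0:ℝ) (ℓ j) :=
    fun j h1 h2 => ⟨le_refl _, (hℓ j h1 h2).le⟩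
  have hmemL : ∀ j, 1 ≤ j → j ≤ N → ℓ j ∈ Icc (0:ℝ) (ℓ j) :=
    fun j h1 h2 => ⟨(hℓ j h1 h2).le, le_refl _⟩
  have hrC : ∀ j, 2 ≤ j → j ≤ N → ((m j : ℂ) * (β : ℂ)^2 - 1) ≠ 0 := by
    intro j h2 hN' hc
    apply hmβ j h2 hN'
    have : ((m j * β^2 : ℝ) : ℂ) = 1 := by push_cast; linear_combination hc
    exact_mod_cast this
  -- the pairing of `q j` against `y j 0` is real
  have hqim : ∀ j, 2 ≤ j → j ≤ N → ((starRingEnd ℂ) (y j 0) * q j).im = 0 := by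
    intro j h2 hN'
    have hr : m j * β^2 - 1 ≠ 0 := sub_ne_zero.mpr (hmβ j h2 hN')
    have e1 := hq j h2 hN'
    have e2 := hp j h2 hN'
    have hkey : ((m j * β^2 - 1 : ℝ) : ℂ) * ((starRingEnd ℂ) (y j 0) * q j)
        = -((β:ℂ)^2 * ((Complex.normSq (y j 0) : ℝ) : ℂ)) := by
      rw [show ((Complex.normSq (y j 0) : ℝ) : ℂ) = y j 0 * (starRingEnd ℂ) (y j 0) from
        (Complex.mul_conj _).symm]
      push_cast
      linear_combination ((m j : ℂ) * (β:ℂ)^2 - 1) * (starRingEnd ℂ) (y j 0) * e1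
        + Complex.I * (β:ℂ) * (starRingEnd ℂ) (y j 0) * e2
        + ((starRingEnd ℂ) (y j 0) * y j 0 * (β:ℂ)^2) * Complex.I_sq
    have him := congrArg Complex.im hkey
    simp only [Complex.neg_im, Complex.mul_im, Complex.ofReal_re, Complex.ofReal_im,
      pow_two, Complex.mul_re] at him
    have him' : (m j * β^2 - 1) * ((starRingEnd ℂ) (y j 0) * q j).im = 0 := by
      rw [Complex.mul_im]
      linear_combination him
    exact (mul_eq_zero.mp him').resolve_left hr
  -- Φ is continuous across the interior nodes
  have hnode : ∀ j, 2 ≤ j → j ≤ N → Φ j 0 = Φ (j-1) (ℓ (j-1)) := by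
    intro j h2 hN'
    have hj' : derivWithin (y j) (Icc 0 (ℓ j)) 0
        = derivWithin (y (j-1)) (Icc 0 (ℓ (j-1))) (ℓ (j-1)) + q j := by
      have h := hjump j h2 hN'; linear_combination h
    simp only [hΦ]
    rw [hj', mul_add, Complex.add_im, hqim j h2 hN', add_zero, hcont j h2 hN']
  -- Φ at the left endpoint of each string equals Φ at the very first node
  have hchain : ∀ j, 1 ≤ j → j ≤ N → Φ j 0 = Φ 1 0 := by
    intro j hj
    induction j, hj using Nat.le_induction with
    | base => intro _; rfl
    | succ n hn ih =>
      intro hnN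
      have h2 : 2 ≤ n + 1 := by omega
      have e1 := hnode (n+1) h2 hnN
      simp only [Nat.add_sub_cancel] at e1
      rw [e1, hphi n hn (by omega) (ℓ n) (hmemL n hn (by omega)), ih (by omega)]
  have hΦ10 : Φ 1 0 = 0 := by
    have hA : Φ N (ℓ N) = Φ N 0 := hphi N (by omega) le_rfl (ℓ N) (hmemL N (by omega) le_rfl)
    have hB : Φ N 0 = Φ 1 0 := hchain N (by omega) le_rfl
    have hC : Φ N (ℓ N) = 0 := by simp [hΦ, hdir]
    rw [← hB, ← hA, hC]
  have h10 : y 1 0 = 0 := by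
    have hv : Φ 1 0 = β * Complex.normSq (y 1 0) := by
      simp only [hΦ, hfb]
      simp [Complex.mul_im, Complex.mul_re, Complex.normSq_apply]
      ring
    rw [hv] at hΦ10
    exact Complex.normSq_eq_zero.mp ((mul_eq_zero.mp hΦ10).resolve_left hβ)
  have h10' : derivWithin (y 1) (Icc 0 (ℓ 1)) 0 = 0 := by rw [hfb, h10, mul_zero]
  -- forward induction: everything vanishes
  have hz : ∀ j, 1 ≤ j → j ≤ N → ∀ x ∈ Icc (0:ℝ) (ℓ j),
      y j x = 0 ∧ derivWithin (y j) (Icc 0 (ℓ j)) x = 0 := by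
    intro j hj
    induction j, hj using Nat.le_induction with
    | base =>
      intro h1N
      exact zero_sol (hℓ 1 le_rfl h1N) hβ (hy 1 le_rfl h1N) (hode 1 le_rfl h1N) h10 h10'
    | succ n hn ih =>
      intro hnN
      have hnN' : n ≤ N := by omega
      have h2 : 2 ≤ n + 1 := by omega
      have h1n1 : 1 ≤ n + 1 := by omega
      have hprev := ih hnN' (ℓ n) (hmemL n hn hnN')
      have h0 : y (n+1) 0 = 0 := by
        have hc := hcont (n+1) h2 hnN
        simp only [Nat.add_sub_cancel] at hc
        rw [hc, hprev.1]
      have hp0 : p (n+1) = 0 := by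
        have e2 := hp (n+1) h2 hnN
        rw [h0, mul_zero] at e2
        exact (mul_eq_zero.mp e2).resolve_left (hrC (n+1) h2 hnN)
      have hq0 : q (n+1) = 0 := by rw [hq (n+1) h2 hnN, hp0, mul_zero]
      have h0' : derivWithin (y (n+1)) (Icc 0 (ℓ (n+1))) 0 = 0 := by
        have e := hjump (n+1) h2 hnN
        simp only [Nat.add_sub_cancel] at e
        rw [hprev.2, hq0] at e
        linear_combination e
      exact zero_sol (hℓ (n+1) h1n1 hnN) hβ (hy (n+1) h1n1 hnN) (hode (n+1) h1n1 hnN) h0 h0'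
  refine ⟨fun j h1 h2 x hx => (hz j h1 h2 x hx).1, ?_⟩
  intro j h2 hN'
  have h1j : 1 ≤ j := by omega
  have h0 : y j 0 = 0 := (hz j h1j hN' 0 (hmem0 j h1j hN')).1
  have hp0 : p j = 0 := by
    have e2 := hp j h2 hN'
    rw [h0, mul_zero] at e2
    exact (mul_eq_zero.mp e2).resolve_left (hrC j h2 hN')
  exact ⟨hp0, by rw [hq j h2 hN', hp0, mul_zero]⟩
end
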